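/- arXiv:2108.11816 — 2 statements merged into one kernel-verified Lean document; each statement's English description precedes it below -/
import Mathlib

section
/- For every multigraph G and every valid pair of functions (g,h), the list coloring analogue of the (g,h)-oriented chromatic index equals the (g,h)-oriented chromatic index: χ'_{(g,h),ℓ}(G) = χ'_{(g,h)}(G). -/
open Classical

noncomputable section

namespace MG

variable {V : Type} {E : Type} [Fintype V] [Fintype E] [DecidableEq V]

/-- The number of times vertex `v` occurs as an endpoint of the unordered pair `s`
(so a loop at `v` counts twice). -/
def mult (v : V) (s : Sym2 V) : ℕ :=
  Sym2.lift ⟨fun a b => (if a = v then 1 else 0) + (if b = v then 1 else 0),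
    fun _ _ => add_comm _ _⟩ s

/-- The degree of a vertex in the multigraph whose edges `E` have endpoints given
by `ends` (loops count twice). -/
def degree (ends : E → Sym2 V) (v : V) : ℕ := ∑ e : E, mult v (ends e)

/-- Maximum degree `Δ(G)`. -/
def maxDegree (ends : E → Sym2 V) : ℕ := Finset.univ.sup fun v => degree ends v

/-- `e(S)`: the number of edges with all endpoints in `S`. -/
def edgesWithin (ends : E → Sym2 V) (S : Finset V) : ℕ :=
  (Finset.univ.filter fun e => ∀ v ∈ ends e, v ∈ S).card

/-- The degree of `v` in the subgraph induced by `S`. -/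
def degreeIn (ends : E → Sym2 V) (S : Finset V) (v : V) : ℕ :=
  ∑ e ∈ Finset.univ.filter (fun e => ∀ u ∈ ends e, u ∈ S), mult v (ends e)

/-- Adjacency; a vertex with a loop is adjacent to itself. -/
def Adj (ends : E → Sym2 V) (u v : V) : Prop := ∃ e, ends e = s(u, v)

/-- The multigraph has no loops. -/
def Loopless (ends : E → Sym2 V) : Prop := ∀ e, ¬ (ends e).IsDiag

/-- Reachability by walks. -/
def Reaches (ends : E → Sym2 V) (u v : V) : Prop :=
  Relation.ReflTransGen (Adj ends) u v

/-- The connected component of `v`, as a set of vertices. -/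
def component (ends : E → Sym2 V) (v : V) : Finset V :=
  Finset.univ.filter fun u => Reaches ends v u

/-- A pseudoforest: every connected component contains at most one cycle
(a loop counts as a cycle); equivalently, every connected component has at
most as many edges as vertices. -/
def IsPseudoforest (ends : E → Sym2 V) : Prop :=
  ∀ v : V, edgesWithin ends (component ends v) ≤ (component ends v).card

/-- A forest (acyclic multigraph): every connected component has strictly fewer
edges than vertices. -/
def IsForest (ends : E → Sym2 V) : Prop :=
  ∀ v : V, edgesWithin ends (component ends v) + 1 ≤ (component ends v).card

/-- An orientation assigns to each edge an ordered pair of its endpoints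
(tail, head). -/
def IsOrientation (ends : E → Sym2 V) (D : E → V × V) : Prop :=
  ∀ e, Sym2.mk (D e).1 (D e).2 = ends e

/-- Indegree of `v` under the orientation `D`. -/
def inDeg (D : E → V × V) (v : V) : ℕ := (Finset.univ.filter fun e => (D e).2 = v).card

/-- Outdegree of `v` under the orientation `D`. -/
def outDeg (D : E → V × V) (v : V) : ℕ := (Finset.univ.filter fun e => (D e).1 = v).card

/-- `G` is `(g,h)`-orientable: there is an orientation in which every vertex `v`
has indegree at most `g v` and outdegree at most `h v`. -/
def GHOrientable (ends : E → Sym2 V) (g h : V → ℕ∞) : Prop :=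
  ∃ D : E → V × V, IsOrientation ends D ∧
    (∀ v, (inDeg D v : ℕ∞) ≤ g v) ∧ (∀ v, (outDeg D v : ℕ∞) ≤ h v)

/-- `(g,h)` is a valid pair of functions for `G`. -/
def ValidPair (ends : E → Sym2 V) (g h : V → ℕ∞) : Prop :=
  (∀ v : V, 1 ≤ g v + h v) ∧
  (∀ u v : V, Adj ends u v → 1 ≤ g u + g v) ∧
  (∀ u v : V, Adj ends u v → 1 ≤ h u + h v)

/-- The endpoint map of the subgraph consisting of the edges satisfying `P`. -/
def subEnds (ends : E → Sym2 V) (P : E → Prop) : {e // P e} → Sym2 V :=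
  fun e => ends e.val

/-- A `(g,h)`-oriented-coloring: each color class is a `(g,h)`-orientable subgraph. -/
def GHColoring (ends : E → Sym2 V) (g h : V → ℕ∞) {k : ℕ} (C : E → Fin k) : Prop :=
  ∀ c : Fin k, GHOrientable (subEnds ends fun e => C e = c) g h

/-- The `(g,h)`-oriented chromatic index `χ'_{(g,h)}(G)`. -/
def ghChromaticIndex (ends : E → Sym2 V) (g h : V → ℕ∞) : ℕ :=
  sInf {k | ∃ C : E → Fin k, GHColoring ends g h C}

/-- Ceiling division `⌈a/b⌉` on ℕ. -/
def cdiv (a b : ℕ) : ℕ := (a + b - 1) / b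

/-- Replace `∞` values of `g` by the maximum degree `Δ(G)`. -/
def trunc (ends : E → Sym2 V) (g : V → ℕ∞) (v : V) : ℕ :=
  WithTop.untopD (maxDegree ends) (g v)

/-- The weighted maximum degree `Δ_{(g,h)}(G) = max_v ⌈d(v)/(g(v)+h(v))⌉`
(values `∞` of `g, h` replaced by `Δ(G)`). -/
def ghMaxDegree (ends : E → Sym2 V) (g h : V → ℕ∞) : ℕ :=
  Finset.univ.sup fun v => cdiv (degree ends v) (trunc ends g v + trunc ends h v)

/-- The weighted maximum density
`W_{(g,h)}(G) = max_{S, g(S) ≥ 1, h(S) ≥ 1} ⌈e(S)/min{g(S),h(S)}⌉`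
(values `∞` of `g, h` replaced by `Δ(G)`). -/
def ghMaxDensity (ends : E → Sym2 V) (g h : V → ℕ∞) : ℕ :=
  (Finset.univ.filter fun S : Finset V =>
      (1 ≤ ∑ v ∈ S, g v) ∧ (1 ≤ ∑ v ∈ S, h v)).sup
    fun S => cdiv (edgesWithin ends S)
      (min (∑ v ∈ S, trunc ends g v) (∑ v ∈ S, trunc ends h v))

/-- An edge-coloring into pseudoforests. -/
def PaColoring (ends : E → Sym2 V) {k : ℕ} (C : E → Fin k) : Prop :=
  ∀ c : Fin k, IsPseudoforest (subEnds ends fun e => C e = c)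

/-- The pseudoarboricity `pa(G)`. -/
def pa (ends : E → Sym2 V) : ℕ := sInf {k | ∃ C : E → Fin k, PaColoring ends C}

/-- An edge-coloring into degree-`f` pseudoforests. -/
def PafColoring (ends : E → Sym2 V) (f : V → ℕ) {k : ℕ} (C : E → Fin k) : Prop :=
  ∀ c : Fin k, IsPseudoforest (subEnds ends fun e => C e = c) ∧
    ∀ v, degree (subEnds ends fun e => C e = c) v ≤ f v

/-- The degree-`f` pseudoarboricity `pa_f(G)`. -/
def paf (ends : E → Sym2 V) (f : V → ℕ) : ℕ :=
  sInf {k | ∃ C : E → Fin k, PafColoring ends f C}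

/-- The weighted maximum degree `Δ_f(G) = max_v ⌈d(v)/f(v)⌉`. -/
def fMaxDegree (ends : E → Sym2 V) (f : V → ℕ) : ℕ :=
  Finset.univ.sup fun v => cdiv (degree ends v) (f v)

/-- An edge-coloring into degree-`f` forests. -/
def AfColoring (ends : E → Sym2 V) (f : V → ℕ) {k : ℕ} (C : E → Fin k) : Prop :=
  ∀ c : Fin k, IsForest (subEnds ends fun e => C e = c) ∧
    ∀ v, degree (subEnds ends fun e => C e = c) v ≤ f v

/-- The degree-`f` arboricity `a_f(G)`. -/
def af (ends : E → Sym2 V) (f : V → ℕ) : ℕ :=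
  sInf {k | ∃ C : E → Fin k, AfColoring ends f C}

/-- The arboricity `a(G)`. -/
def arboricity (ends : E → Sym2 V) : ℕ :=
  sInf {k | ∃ C : E → Fin k, ∀ c : Fin k, IsForest (subEnds ends fun e => C e = c)}

/-- The linear arboricity `la(G)`: color classes are linear forests, i.e.
degree-2 forests. -/
def la (ends : E → Sym2 V) : ℕ := af ends fun _ => 2

/-- `G` is `k`-degenerate: every (induced, nonempty) subgraph has a vertex of
degree at most `k`. -/
def Degenerate (ends : E → Sym2 V) (k : ℕ) : Prop :=
  ∀ S : Finset V, S.Nonempty → ∃ v ∈ S, degreeIn ends S v ≤ k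

/-- An `f`-coloring: in each color class every vertex `v` has degree at most `f v`. -/
def FColoring (ends : E → Sym2 V) (f : V → ℕ) {k : ℕ} (C : E → Fin k) : Prop :=
  ∀ c : Fin k, ∀ v, degree (subEnds ends fun e => C e = c) v ≤ f v

/-- The `f`-chromatic index `χ'_f(G)`. -/
def fChromaticIndex (ends : E → Sym2 V) (f : V → ℕ) : ℕ :=
  sInf {k | ∃ C : E → Fin k, FColoring ends f C}

/-- `G` is bipartite: the vertices can be split into two sides so that every
edge has one endpoint on each side. -/
def Bipartite (ends : E → Sym2 V) : Prop :=
  ∃ P : V → Prop, ∀ e : E, ∃ u v, ends e = s(u, v) ∧ P u ∧ ¬ P v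

/-- The list analogue `χ'_{(g,h),ℓ}(G)`: the least `k` such that every list
assignment with lists of size at least `k` admits a coloring from the lists in
which each color class is `(g,h)`-orientable. -/
def ghListChromaticIndex (ends : E → Sym2 V) (g h : V → ℕ∞) : ℕ :=
  sInf {k | ∀ L : E → Finset ℕ, (∀ e, k ≤ (L e).card) →
    ∃ C : E → ℕ, (∀ e, C e ∈ L e) ∧
      ∀ c : ℕ, GHOrientable (subEnds ends fun e => C e = c) g h}

/-- The list degree-`f` pseudoarboricity `pa_{f,ℓ}(G)`. -/
def pafList (ends : E → Sym2 V) (f : V → ℕ) : ℕ :=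
  sInf {k | ∀ L : E → Finset ℕ, (∀ e, k ≤ (L e).card) →
    ∃ C : E → ℕ, (∀ e, C e ∈ L e) ∧
      ∀ c : ℕ, IsPseudoforest (subEnds ends fun e => C e = c) ∧
        ∀ v, degree (subEnds ends fun e => C e = c) v ≤ f v}

/-- The list `f`-chromatic index `χ'_{f,ℓ}(G)`. -/
def fListChromaticIndex (ends : E → Sym2 V) (f : V → ℕ) : ℕ :=
  sInf {k | ∀ L : E → Finset ℕ, (∀ e, k ≤ (L e).card) →
    ∃ C : E → ℕ, (∀ e, C e ∈ L e) ∧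
      ∀ c : ℕ, ∀ v, degree (subEnds ends fun e => C e = c) v ≤ f v}



/-! ### Auxiliary machinery for Theorem 5.3 -/

section Kernel

variable {α β γ : Type} (kX : α → β) (kY : α → γ) (pX : β → Prop) (pY : γ → Prop) (φ : α → ℕ)

/-- X-side conflict relation. -/
def CXr (e f : α) : Prop := e ≠ f ∧ pX (kX e) ∧ kX e = kX f

/-- Y-side conflict relation. -/
def CYr (e f : α) : Prop := e ≠ f ∧ pY (kY e) ∧ kY e = kY f

/-- The Galvin out-relation. -/
def OutR (e f : α) : Prop :=
  (CXr kX pX e f ∧ φ e < φ f) ∨ (CYr kY pY e f ∧ φ f < φ e)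

variable [DecidableEq α]

lemma kernel_exists
    (hX : ∀ e f, kX e = kX f → φ e = φ f → e = f)
    (hY : ∀ e f, kY e = kY f → φ e = φ f → e = f) :
    ∀ (n : ℕ) (F : Finset α), F.card ≤ n →
      ∃ M : Finset α, M ⊆ F ∧
        (∀ e ∈ M, ∀ f ∈ M, e ≠ f → ¬ CXr kX pX e f ∧ ¬ CYr kY pY e f) ∧
        (∀ e ∈ F, e ∉ M → ∃ m ∈ M, OutR kX kY pX pY φ e m) := by
  intro n
  induction n with
  | zero =>
    intro F hF
    have hFe : F = ∅ := Finset.card_eq_zero.mp (Nat.le_zero.mp hF)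
    subst hFe
    exact ⟨∅, le_refl _, by simp, by simp⟩
  | succ n ih =>
    intro F hF
    by_cases hR : ∃ r ∈ F.filter (fun e => ∀ f ∈ F, CXr kX pX e f → φ f < φ e),
        ∃ e' ∈ F.filter (fun e => ∀ f ∈ F, CXr kX pX e f → φ f < φ e),
          CYr kY pY r e' ∧ φ e' < φ r
    · obtain ⟨r, hrP, e', he'P, hrY, hlt⟩ := hR
      have hrF : r ∈ F := (Finset.mem_filter.mp hrP).1
      have he'F : e' ∈ F := (Finset.mem_filter.mp he'P).1
      have hne : e' ≠ r := by
        intro hh; rw [hh] at hlt; exact lt_irrefl _ hlt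
      obtain ⟨M, hMsub, hMi, hMii⟩ := ih (F.erase r) (by
        have := Finset.card_erase_of_mem hrF; omega)
      refine ⟨M, hMsub.trans (Finset.erase_subset _ _), hMi, ?_⟩
      intro e heF heM
      by_cases her : e = r
      · subst her
        by_cases he'M : e' ∈ M
        · exact ⟨e', he'M, Or.inr ⟨hrY, hlt⟩⟩
        · obtain ⟨m, hmM, hout⟩ := hMii e' (Finset.mem_erase.mpr ⟨hne, he'F⟩) he'M
          have hmFe : m ∈ F.erase e := hMsub hmM
          have hmF : m ∈ F := Finset.mem_of_mem_erase hmFe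
          have hmne : m ≠ e := (Finset.mem_erase.mp hmFe).1
          rcases hout with ⟨hcx, hφ⟩ | ⟨hcy, hφ⟩
          · exact absurd ((Finset.mem_filter.mp he'P).2 m hmF hcx) (by omega)
          · refine ⟨m, hmM, Or.inr ⟨⟨hmne.symm, hrY.2.1, hrY.2.2.trans hcy.2.2⟩, ?_⟩⟩
            omega
      · exact hMii e (Finset.mem_erase.mpr ⟨her, heF⟩) heM
    · refine ⟨F.filter (fun e => ∀ f ∈ F, CXr kX pX e f → φ f < φ e),
        Finset.filter_subset _ _, ?_, ?_⟩
      · intro e heP f hfP hne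
        have heF : e ∈ F := (Finset.mem_filter.mp heP).1
        have hfF : f ∈ F := (Finset.mem_filter.mp hfP).1
        constructor
        · rintro ⟨-, hpx, hk⟩
          have h1 := (Finset.mem_filter.mp heP).2 f hfF ⟨hne, hpx, hk⟩
          have h2 := (Finset.mem_filter.mp hfP).2 e heF ⟨hne.symm, by rw [← hk]; exact hpx, hk.symm⟩
          omega
        · rintro ⟨-, hpy, hk⟩
          have hφne : φ e ≠ φ f := fun hq => hne (hY e f hk hq)
          rcases lt_or_gt_of_ne hφne with hh | hh
          · exact hR ⟨f, hfP, e, heP, ⟨hne.symm, by rw [← hk]; exact hpy, hk.symm⟩, hh⟩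
          · exact hR ⟨e, heP, f, hfP, ⟨hne, hpy, hk⟩, hh⟩
      · intro e heF heP
        have hnot : ¬ ∀ f ∈ F, CXr kX pX e f → φ f < φ e := fun hh =>
          heP (Finset.mem_filter.mpr ⟨heF, hh⟩)
        push_neg at hnot
        obtain ⟨f, hfF, hcx, hnlt⟩ := hnot
        have hef : φ e < φ f := by
          have : φ e ≠ φ f := fun hq => hcx.1 (hX e f hcx.2.2 hq)
          omega
        have hfS : f ∈ F.filter (fun x => kX x = kX e) :=
          Finset.mem_filter.mpr ⟨hfF, hcx.2.2.symm⟩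
        obtain ⟨m, hmS, hmax⟩ := Finset.exists_max_image _ φ ⟨f, hfS⟩
        have hmF : m ∈ F := (Finset.mem_filter.mp hmS).1
        have hkm : kX m = kX e := (Finset.mem_filter.mp hmS).2
        have hme : φ e < φ m := lt_of_lt_of_le hef (hmax f hfS)
        have hmne : m ≠ e := fun hq => by rw [hq] at hme; exact lt_irrefl _ hme
        have hmP : m ∈ F.filter (fun x => ∀ f' ∈ F, CXr kX pX x f' → φ f' < φ x) := by
          refine Finset.mem_filter.mpr ⟨hmF, ?_⟩
          intro f' hf'F hcx'
          have hf'S : f' ∈ F.filter (fun x => kX x = kX e) :=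
            Finset.mem_filter.mpr ⟨hf'F, hcx'.2.2.symm.trans hkm⟩
          have h1 := hmax f' hf'S
          have h2 : φ f' ≠ φ m := fun hq => hcx'.1 (hX m f' hcx'.2.2 hq.symm)
          omega
        exact ⟨m, hmP, Or.inl ⟨⟨hmne.symm, hcx.2.1, hkm.symm⟩, hme⟩⟩

lemma list_coloring
    (hX : ∀ e f, kX e = kX f → φ e = φ f → e = f)
    (hY : ∀ e f, kY e = kY f → φ e = φ f → e = f) :
    ∀ (n : ℕ) (F : Finset α) (L : α → Finset ℕ), F.card ≤ n →
      (∀ e ∈ F, (F.filter fun f => OutR kX kY pX pY φ e f).card < (L e).card) →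
      ∃ C : α → ℕ, (∀ e ∈ F, C e ∈ L e) ∧
        ∀ e ∈ F, ∀ f ∈ F, e ≠ f → C e = C f →
          ¬ CXr kX pX e f ∧ ¬ CYr kY pY e f := by
  intro n
  induction n with
  | zero =>
    intro F L hF _
    have hFe : F = ∅ := Finset.card_eq_zero.mp (Nat.le_zero.mp hF)
    subst hFe
    exact ⟨fun _ => 0, by simp, by simp⟩
  | succ n ih =>
    intro F L hF hL
    rcases F.eq_empty_or_nonempty with hFe | ⟨e₀, he₀⟩
    · subst hFe
      exact ⟨fun _ => 0, by simp, by simp⟩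
    · have hLne : (L e₀).Nonempty := by
        rw [← Finset.card_pos]
        exact lt_of_le_of_lt (Nat.zero_le _) (hL e₀ he₀)
      obtain ⟨c, hc⟩ := hLne
      obtain ⟨M, hMsub, hMi, hMii⟩ := kernel_exists kX kY pX pY φ hX hY
        (F.filter (fun e => c ∈ L e)).card (F.filter (fun e => c ∈ L e)) le_rfl
      have hMF : M ⊆ F := hMsub.trans (Finset.filter_subset _ _)
      have he₀Fc : e₀ ∈ F.filter (fun e => c ∈ L e) := Finset.mem_filter.mpr ⟨he₀, hc⟩
      have hMne : M.Nonempty := by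
        rcases M.eq_empty_or_nonempty with hMe | hMne
        · exfalso
          obtain ⟨m, hm, -⟩ := hMii e₀ he₀Fc (by simp [hMe])
          simp [hMe] at hm
        · exact hMne
      obtain ⟨m₀, hm₀⟩ := hMne
      have hcard' : (F \ M).card ≤ n := by
        have hss : F \ M ⊂ F := by
          refine Finset.sdiff_ssubset ?_ ⟨m₀, hm₀⟩
          exact hMF
        have := Finset.card_lt_card hss
        omega
      have hL' : ∀ e ∈ F \ M, ((F \ M).filter fun f => OutR kX kY pX pY φ e f).card
          < ((L e).erase c).card := by
        intro e heF'
        have heF : e ∈ F := (Finset.mem_sdiff.mp heF').1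
        have heM : e ∉ M := (Finset.mem_sdiff.mp heF').2
        by_cases hce : c ∈ L e
        · obtain ⟨m, hmM, hout⟩ := hMii e (Finset.mem_filter.mpr ⟨heF, hce⟩) heM
          have hmfil : m ∈ F.filter (fun f => OutR kX kY pX pY φ e f) :=
            Finset.mem_filter.mpr ⟨hMF hmM, hout⟩
          have hsub2 : (F \ M).filter (fun f => OutR kX kY pX pY φ e f)
              ⊆ (F.filter (fun f => OutR kX kY pX pY φ e f)).erase m := by
            intro x hx
            have hx1 := Finset.mem_filter.mp hx
            have hx2 := Finset.mem_sdiff.mp hx1.1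
            refine Finset.mem_erase.mpr ⟨?_, Finset.mem_filter.mpr ⟨hx2.1, hx1.2⟩⟩
            intro hq; rw [hq] at hx2; exact hx2.2 hmM
          have h1 := Finset.card_le_card hsub2
          have h2 := Finset.card_erase_of_mem hmfil
          have h3 := hL e heF
          have h4 := Finset.card_erase_of_mem hce
          have h5 : 1 ≤ (F.filter (fun f => OutR kX kY pX pY φ e f)).card :=
            Finset.card_pos.mpr ⟨m, hmfil⟩
          omega
        · have h1 : ((L e).erase c).card = (L e).card := by
            rw [Finset.erase_eq_of_notMem hce]
          have h2 : (F \ M).filter (fun f => OutR kX kY pX pY φ e f)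
              ⊆ F.filter (fun f => OutR kX kY pX pY φ e f) :=
            Finset.filter_subset_filter _ Finset.sdiff_subset
          have h3 := Finset.card_le_card h2
          have h4 := hL e heF
          omega
      obtain ⟨C', hmem', hfree'⟩ := ih (F \ M) (fun e => (L e).erase c) hcard' hL'
      refine ⟨fun f => if f ∈ M then c else C' f, ?_, ?_⟩
      · intro e heF
        by_cases heM : e ∈ M
        · simp only [heM, if_true]
          exact (Finset.mem_filter.mp (hMsub heM)).2
        · simp only [heM, if_false]
          exact Finset.mem_of_mem_erase (hmem' e (Finset.mem_sdiff.mpr ⟨heF, heM⟩))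
      · intro e heF f hfF hne heq
        by_cases heM : e ∈ M <;> by_cases hfM : f ∈ M
        · exact hMi e heM f hfM hne
        · exfalso
          simp only [heM, hfM, if_true, if_false] at heq
          have := hmem' f (Finset.mem_sdiff.mpr ⟨hfF, hfM⟩)
          rw [← heq] at this
          exact Finset.notMem_erase _ _ this
        · exfalso
          simp only [heM, hfM, if_true, if_false] at heq
          have := hmem' e (Finset.mem_sdiff.mpr ⟨heF, heM⟩)
          rw [heq] at this
          exact Finset.notMem_erase _ _ this
        · exact hfree' e (Finset.mem_sdiff.mpr ⟨heF, heM⟩) f (Finset.mem_sdiff.mpr ⟨hfF, hfM⟩)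
            hne (by simpa [heM, hfM] using heq)

end Kernel

section Rank

variable {α ι : Type} [Fintype α] [DecidableEq ι]

/-- Rank of `e` within its `key`-class, w.r.t. an injective ordering `ord`. -/
def rkv (key : α → ι) (ord : α → ℕ) (e : α) : ℕ :=
  (Finset.univ.filter fun x => key x = key e ∧ ord x < ord e).card

lemma rkv_lt (key : α → ι) (ord : α → ℕ) (e : α) :
    rkv key ord e < (Finset.univ.filter fun x => key x = key e).card := by
  apply Finset.card_lt_card
  rw [Finset.ssubset_iff_of_subset (fun x hx =>
    Finset.mem_filter.mpr ⟨Finset.mem_univ _, (Finset.mem_filter.mp hx).2.1⟩)]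
  refine ⟨e, Finset.mem_filter.mpr ⟨Finset.mem_univ _, rfl⟩, ?_⟩
  intro hmem
  exact absurd (Finset.mem_filter.mp hmem).2.2 (lt_irrefl _)

lemma rkv_mono (key : α → ι) (ord : α → ℕ) {e f : α} (hk : key e = key f)
    (hlt : ord e < ord f) : rkv key ord e < rkv key ord f := by
  apply Finset.card_lt_card
  rw [Finset.ssubset_iff_of_subset (fun x hx => ?_)]
  · refine ⟨e, Finset.mem_filter.mpr ⟨Finset.mem_univ _, hk, hlt⟩, ?_⟩
    intro hmem
    exact absurd (Finset.mem_filter.mp hmem).2.2 (lt_irrefl _)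
  · obtain ⟨-, h1, h2⟩ := Finset.mem_filter.mp hx
    exact Finset.mem_filter.mpr ⟨Finset.mem_univ _, h1.trans hk, h2.trans hlt⟩

lemma rkv_inj (key : α → ι) (ord : α → ℕ) (hord : Function.Injective ord)
    {e f : α} (hk : key e = key f) (hr : rkv key ord e = rkv key ord f) : e = f := by
  rcases lt_trichotomy (ord e) (ord f) with hlt | heq | hgt
  · exact absurd hr (Nat.ne_of_lt (rkv_mono key ord hk hlt))
  · exact hord heq
  · exact absurd hr.symm (Nat.ne_of_lt (rkv_mono key ord hk.symm hgt))

end Rank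

section App

variable {V E : Type} [Fintype V] [Fintype E] [DecidableEq V]

/-- A fixed injective enumeration of the edges. -/
def ordE (e : E) : ℕ := (Fintype.equivFin E e : ℕ)

lemma ordE_injective : Function.Injective (ordE (E := E)) := fun a b hab =>
  (Fintype.equivFin E).injective (Fin.val_injective hab)

variable {k : ℕ}

def inKey (C₀ : E → Fin k) (D : E → V × V) (e : E) : V × Fin k := ((D e).2, C₀ e)
def outKey (C₀ : E → Fin k) (D : E → V × V) (e : E) : V × Fin k := ((D e).1, C₀ e)
def inRk (C₀ : E → Fin k) (D : E → V × V) (e : E) : ℕ := rkv (inKey C₀ D) ordE e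
def outRk (C₀ : E → Fin k) (D : E → V × V) (e : E) : ℕ := rkv (outKey C₀ D) ordE e
def XK (C₀ : E → Fin k) (D : E → V × V) (e : E) : V × ℕ := ((D e).2, inRk C₀ D e)
def YK (C₀ : E → Fin k) (D : E → V × V) (e : E) : V × ℕ := ((D e).1, outRk C₀ D e)

lemma XK_inj (C₀ : E → Fin k) (D : E → V × V) (e f : E)
    (h1 : XK C₀ D e = XK C₀ D f) (h2 : (C₀ e : ℕ) = (C₀ f : ℕ)) : e = f := by
  have hv : (D e).2 = (D f).2 := (Prod.ext_iff.mp h1).1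
  have hr : inRk C₀ D e = inRk C₀ D f := (Prod.ext_iff.mp h1).2
  have hc : C₀ e = C₀ f := Fin.val_injective h2
  exact rkv_inj _ _ ordE_injective (by simp [inKey, hv, hc]) hr

lemma YK_inj (C₀ : E → Fin k) (D : E → V × V) (e f : E)
    (h1 : YK C₀ D e = YK C₀ D f) (h2 : (C₀ e : ℕ) = (C₀ f : ℕ)) : e = f := by
  have hv : (D e).1 = (D f).1 := (Prod.ext_iff.mp h1).1
  have hr : outRk C₀ D e = outRk C₀ D f := (Prod.ext_iff.mp h1).2
  have hc : C₀ e = C₀ f := Fin.val_injective h2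
  exact rkv_inj _ _ ordE_injective (by simp [outKey, hv, hc]) hr

lemma out_card_lt (C₀ : E → Fin k) (D : E → V × V) (g h : V → ℕ∞) (e : E) :
    (Finset.univ.filter fun f => OutR (XK C₀ D) (YK C₀ D)
        (fun p => g p.1 ≠ ⊤) (fun p => h p.1 ≠ ⊤) (fun x => (C₀ x : ℕ)) e f).card < k := by
  classical
  have hek : (C₀ e : ℕ) < k := (C₀ e).isLt
  have hmaps : ∀ f ∈ Finset.univ.filter (fun f => OutR (XK C₀ D) (YK C₀ D)
      (fun p => g p.1 ≠ ⊤) (fun p => h p.1 ≠ ⊤) (fun x => (C₀ x : ℕ)) e f),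
      (C₀ f : ℕ) ∈ (Finset.range k).erase (C₀ e : ℕ) := by
    intro f hf
    have hf2 := (Finset.mem_filter.mp hf).2
    simp only [OutR, CXr, CYr] at hf2
    refine Finset.mem_erase.mpr ⟨?_, Finset.mem_range.mpr (C₀ f).isLt⟩
    rcases hf2 with ⟨-, hlt⟩ | ⟨-, hlt⟩ <;> omega
  have hinj : Set.InjOn (fun f => (C₀ f : ℕ))
      ↑(Finset.univ.filter fun f => OutR (XK C₀ D) (YK C₀ D)
        (fun p => g p.1 ≠ ⊤) (fun p => h p.1 ≠ ⊤) (fun x => (C₀ x : ℕ)) e f) := by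
    intro a ha b hb hab
    simp only [Finset.mem_coe, Finset.mem_filter] at ha hb
    have hab' : (C₀ a : ℕ) = (C₀ b : ℕ) := hab
    have ha2 := ha.2
    have hb2 := hb.2
    simp only [OutR, CXr, CYr] at ha2 hb2
    rcases ha2 with ⟨hax, hae⟩ | ⟨hay, hae⟩ <;> rcases hb2 with ⟨hbx, hbe⟩ | ⟨hby, hbe⟩
    · exact XK_inj C₀ D a b (hax.2.2.symm.trans hbx.2.2) hab'
    · omega
    · omega
    · exact YK_inj C₀ D a b (hay.2.2.symm.trans hby.2.2) hab'
  have h1 := Finset.card_le_card_of_injOn _ hmaps hinj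
  have h2 : ((Finset.range k).erase (C₀ e : ℕ)).card = k - 1 := by
    rw [Finset.card_erase_of_mem (Finset.mem_range.mpr hek), Finset.card_range]
  omega

lemma hard_direction (ends : E → Sym2 V) (g h : V → ℕ∞) (k : ℕ)
    (C₀ : E → Fin k) (hC₀ : GHColoring ends g h C₀)
    (L : E → Finset ℕ) (hLk : ∀ e, k ≤ (L e).card) :
    ∃ C : E → ℕ, (∀ e, C e ∈ L e) ∧
      ∀ c : ℕ, GHOrientable (subEnds ends fun e => C e = c) g h := by
  classical
  choose Dc hDor hDg hDh using hC₀
  obtain ⟨D, hD⟩ : ∃ D : E → V × V, ∀ e, D e = Dc (C₀ e) ⟨e, rfl⟩ := ⟨_, fun _ => rfl⟩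
  have hDspec : ∀ (c : Fin k) (e : E) (he : C₀ e = c), Dc c ⟨e, he⟩ = D e := by
    intro c e he
    subst he
    exact (hD e).symm
  have hDor' : ∀ e, Sym2.mk (D e).1 (D e).2 = ends e := by
    intro e
    rw [← hDspec (C₀ e) e rfl]
    exact hDor (C₀ e) ⟨e, rfl⟩
  have hgroupIn : ∀ (c : Fin k) (v : V) (n : ℕ), g v = (n : ℕ∞) →
      (Finset.univ.filter fun x => inKey C₀ D x = (v, c)).card ≤ n := by
    intro c v n hn
    have hmem : ∀ x, x ∈ Finset.univ.filter (fun x => inKey C₀ D x = (v, c)) →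
        (D x).2 = v ∧ C₀ x = c := by
      intro x hx
      have hx2 := (Finset.mem_filter.mp hx).2
      exact ⟨(Prod.ext_iff.mp hx2).1, (Prod.ext_iff.mp hx2).2⟩
    have hcard : (Finset.univ.filter fun x => inKey C₀ D x = (v, c)).card = inDeg (Dc c) v := by
      unfold inDeg
      apply Finset.card_bij (fun x hx => (⟨x, (hmem x hx).2⟩ : {e // C₀ e = c}))
      · intro a ha
        refine Finset.mem_filter.mpr ⟨Finset.mem_univ _, ?_⟩
        rw [hDspec c a (hmem a ha).2]
        exact (hmem a ha).1
      · intro a ha b hb hab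
        exact congrArg Subtype.val hab
      · intro b hb
        refine ⟨b.1, ?_, Subtype.ext rfl⟩
        refine Finset.mem_filter.mpr ⟨Finset.mem_univ _, ?_⟩
        have h2 : (D b.1).2 = v := by
          rw [← hDspec c b.1 b.2]
          exact (Finset.mem_filter.mp hb).2
        unfold inKey
        rw [h2, b.2]
    rw [hcard]
    have h3 := hDg c v
    rw [hn] at h3
    exact_mod_cast h3
  have hgroupOut : ∀ (c : Fin k) (v : V) (n : ℕ), h v = (n : ℕ∞) →
      (Finset.univ.filter fun x => outKey C₀ D x = (v, c)).card ≤ n := by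
    intro c v n hn
    have hmem : ∀ x, x ∈ Finset.univ.filter (fun x => outKey C₀ D x = (v, c)) →
        (D x).1 = v ∧ C₀ x = c := by
      intro x hx
      have hx2 := (Finset.mem_filter.mp hx).2
      exact ⟨(Prod.ext_iff.mp hx2).1, (Prod.ext_iff.mp hx2).2⟩
    have hcard : (Finset.univ.filter fun x => outKey C₀ D x = (v, c)).card = outDeg (Dc c) v := by
      unfold outDeg
      apply Finset.card_bij (fun x hx => (⟨x, (hmem x hx).2⟩ : {e // C₀ e = c}))
      · intro a ha
        refine Finset.mem_filter.mpr ⟨Finset.mem_univ _, ?_⟩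
        rw [hDspec c a (hmem a ha).2]
        exact (hmem a ha).1
      · intro a ha b hb hab
        exact congrArg Subtype.val hab
      · intro b hb
        refine ⟨b.1, ?_, Subtype.ext rfl⟩
        refine Finset.mem_filter.mpr ⟨Finset.mem_univ _, ?_⟩
        have h2 : (D b.1).1 = v := by
          rw [← hDspec c b.1 b.2]
          exact (Finset.mem_filter.mp hb).2
        unfold outKey
        rw [h2, b.2]
    rw [hcard]
    have h3 := hDh c v
    rw [hn] at h3
    exact_mod_cast h3
  obtain ⟨C, hCmem, hCfree⟩ := list_coloring (XK C₀ D) (YK C₀ D)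
      (fun p => g p.1 ≠ ⊤) (fun p => h p.1 ≠ ⊤) (fun x => (C₀ x : ℕ))
      (XK_inj C₀ D) (YK_inj C₀ D) (Finset.univ.card) Finset.univ L le_rfl
      (fun e _ => lt_of_lt_of_le
        (lt_of_le_of_lt (Finset.card_le_card (Finset.filter_subset_filter _
          (Finset.subset_univ _))) (out_card_lt C₀ D g h e)) (hLk e))
  refine ⟨C, fun e => hCmem e (Finset.mem_univ e), ?_⟩
  intro c'
  refine ⟨fun y => D y.1, fun y => hDor' y.1, ?_, ?_⟩
  · intro v
    by_cases hgv : g v = ⊤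
    · rw [hgv]; exact le_top
    · obtain ⟨n, hn⟩ : ∃ n : ℕ, g v = (n : ℕ∞) := Option.ne_none_iff_exists'.mp hgv
      rw [hn]
      refine Nat.cast_le.mpr ?_
      have hmaps : ∀ y ∈ Finset.univ.filter (fun y : {e // C e = c'} => (D y.1).2 = v),
          inRk C₀ D y.1 ∈ Finset.range n := by
        intro y hy
        have hv : (D y.1).2 = v := (Finset.mem_filter.mp hy).2
        have h1 := rkv_lt (inKey C₀ D) ordE y.1
        have h2 : (Finset.univ.filter fun x => inKey C₀ D x = inKey C₀ D y.1)
            = (Finset.univ.filter fun x => inKey C₀ D x = (v, C₀ y.1)) := by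
          have h3 : inKey C₀ D y.1 = (v, C₀ y.1) := by
            unfold inKey; rw [hv]
          rw [h3]
        rw [h2] at h1
        exact Finset.mem_range.mpr (lt_of_lt_of_le h1 (hgroupIn (C₀ y.1) v n hn))
      have hinj : Set.InjOn (fun y : {e // C e = c'} => inRk C₀ D y.1)
          ↑(Finset.univ.filter (fun y : {e // C e = c'} => (D y.1).2 = v)) := by
        intro y hy z hz hrk
        simp only [Finset.mem_coe, Finset.mem_filter] at hy hz
        by_cases hyz : y.1 = z.1
        · exact Subtype.ext hyz
        · exfalso
          have hrk' : inRk C₀ D y.1 = inRk C₀ D z.1 := hrk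
          have hC : C y.1 = C z.1 := y.2.trans z.2.symm
          apply (hCfree y.1 (Finset.mem_univ _) z.1 (Finset.mem_univ _) hyz hC).1
          refine ⟨hyz, ?_, ?_⟩
          · have hne : g ((D y.1).2) ≠ ⊤ := by
              rw [hy.2]; exact hgv
            exact hne
          · have hXK : XK C₀ D y.1 = XK C₀ D z.1 := by
              unfold XK
              rw [hy.2, hz.2, hrk']
            exact hXK
      have hle := Finset.card_le_card_of_injOn _ hmaps hinj
      rw [Finset.card_range] at hle
      exact hle
  · intro v
    by_cases hgv : h v = ⊤
    · rw [hgv]; exact le_top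
    · obtain ⟨n, hn⟩ : ∃ n : ℕ, h v = (n : ℕ∞) := Option.ne_none_iff_exists'.mp hgv
      rw [hn]
      refine Nat.cast_le.mpr ?_
      have hmaps : ∀ y ∈ Finset.univ.filter (fun y : {e // C e = c'} => (D y.1).1 = v),
          outRk C₀ D y.1 ∈ Finset.range n := by
        intro y hy
        have hv : (D y.1).1 = v := (Finset.mem_filter.mp hy).2
        have h1 := rkv_lt (outKey C₀ D) ordE y.1
        have h2 : (Finset.univ.filter fun x => outKey C₀ D x = outKey C₀ D y.1)
            = (Finset.univ.filter fun x => outKey C₀ D x = (v, C₀ y.1)) := by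
          have h3 : outKey C₀ D y.1 = (v, C₀ y.1) := by
            unfold outKey; rw [hv]
          rw [h3]
        rw [h2] at h1
        exact Finset.mem_range.mpr (lt_of_lt_of_le h1 (hgroupOut (C₀ y.1) v n hn))
      have hinj : Set.InjOn (fun y : {e // C e = c'} => outRk C₀ D y.1)
          ↑(Finset.univ.filter (fun y : {e // C e = c'} => (D y.1).1 = v)) := by
        intro y hy z hz hrk
        simp only [Finset.mem_coe, Finset.mem_filter] at hy hz
        by_cases hyz : y.1 = z.1
        · exact Subtype.ext hyz
        · exfalso
          have hrk' : outRk C₀ D y.1 = outRk C₀ D z.1 := hrk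
          have hC : C y.1 = C z.1 := y.2.trans z.2.symm
          apply (hCfree y.1 (Finset.mem_univ _) z.1 (Finset.mem_univ _) hyz hC).2
          refine ⟨hyz, ?_, ?_⟩
          · have hne : h ((D y.1).1) ≠ ⊤ := by
              rw [hy.2]; exact hgv
            exact hne
          · have hYK : YK C₀ D y.1 = YK C₀ D z.1 := by
              unfold YK
              rw [hy.2, hz.2, hrk']
            exact hYK
      have hle := Finset.card_le_card_of_injOn _ hmaps hinj
      rw [Finset.card_range] at hle
      exact hle

lemma GHOrientable_congr {V E : Type} [Fintype V] [DecidableEq V]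
    (ends : E → Sym2 V) (g h : V → ℕ∞) {P Q : E → Prop}
    [Fintype {e : E // P e}] [Fintype {e : E // Q e}]
    (hPQ : ∀ e, P e ↔ Q e)
    (hor : GHOrientable (subEnds ends P) g h) : GHOrientable (subEnds ends Q) g h := by
  have hPQ' : P = Q := funext fun e => propext (hPQ e)
  subst hPQ'
  convert hor using 2

lemma easy_direction (ends : E → Sym2 V) (g h : V → ℕ∞) (k : ℕ)
    (hk : ∀ L : E → Finset ℕ, (∀ e, k ≤ (L e).card) →
      ∃ C : E → ℕ, (∀ e, C e ∈ L e) ∧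
        ∀ c : ℕ, GHOrientable (subEnds ends fun e => C e = c) g h) :
    ∃ C : E → Fin k, GHColoring ends g h C := by
  obtain ⟨C, hmem, hor⟩ := hk (fun _ => Finset.range k) (fun e => le_of_eq (Finset.card_range k).symm)
  have hlt : ∀ e, C e < k := fun e => Finset.mem_range.mp (hmem e)
  refine ⟨fun e => ⟨C e, hlt e⟩, ?_⟩
  intro c
  refine GHOrientable_congr ends g h (fun e => ?_) (hor (c : ℕ))
  constructor
  · intro hq
    exact Fin.ext hq
  · intro hq
    exact congrArg Fin.val hq

end App

/-- Theorem 5.3: for every multigraph `G` and valid pair `(g,h)`,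
`χ'_{(g,h),ℓ}(G) = χ'_{(g,h)}(G)`. -/
theorem ghListChromaticIndex_eq {V E : Type} [Fintype V] [Fintype E] [DecidableEq V]
    (ends : E → Sym2 V) (g h : V → ℕ∞) (hgh : ValidPair ends g h) :
    ghListChromaticIndex ends g h = ghChromaticIndex ends g h := by
  have hset : {k : ℕ | ∀ L : E → Finset ℕ, (∀ e, k ≤ (L e).card) →
      ∃ C : E → ℕ, (∀ e, C e ∈ L e) ∧
        ∀ c : ℕ, GHOrientable (subEnds ends fun e => C e = c) g h}
      = {k : ℕ | ∃ C : E → Fin k, GHColoring ends g h C} := by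
    ext k
    constructor
    · intro hk
      exact easy_direction ends g h k hk
    · rintro ⟨C₀, hC₀⟩
      intro L hLk
      exact hard_direction ends g h k C₀ hC₀ L hLk
  simp only [ghListChromaticIndex, ghChromaticIndex]
  exact congrArg sInf hset

end MG
end
end

section
/- For every multigraph G and every function f : V(G) → ℕ with f(v) ≥ 1 for all v, if G is bipartite or f(v) is even for all v, then the list f-chromatic index equals the f-chromatic index: χ'_{f,ℓ}(G) = χ'_f(G). -/
open Classical

noncomputable section

namespace MG

variable {V : Type} {E : Type} [Fintype V] [Fintype E] [DecidableEq V]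

/-! ### Auxiliary machinery for Statement 18 -/

set_option linter.unusedSectionVars false

section Aux18

variable {F : Type} [Fintype F] {W : Type}

/-- `m` dominates `e`. -/
def dom (l r : F → W) (C0 : F → ℕ) (m e : F) : Prop :=
  m ≠ e ∧ ((l m = l e ∧ C0 m < C0 e) ∨ (r m = r e ∧ C0 e < C0 m))

lemma kernel_aux (l r : F → W) (C0 : F → ℕ)
    (hL : ∀ e e', l e = l e' → C0 e = C0 e' → e = e')
    (hR : ∀ e e', r e = r e' → C0 e = C0 e' → e = e')
    (S : Finset F) :
    ∀ n (R : Finset F), R ⊆ S → (S \ R).card ≤ n →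
      (∀ e ∈ R, ∃ m ∈ S \ R, r m = r e ∧ C0 e < C0 m ∧
          ∀ e' ∈ S \ R, l e' = l m → C0 m ≤ C0 e') →
      ∃ M ⊆ S, (∀ m ∈ M, ∀ m' ∈ M, m ≠ m' → l m ≠ l m' ∧ r m ≠ r m') ∧
        ∀ e ∈ S, e ∉ M → ∃ m ∈ M, dom l r C0 m e := by
  intro n
  induction n with
  | zero =>
    intro R hRS hcard hinv
    refine ⟨∅, Finset.empty_subset _, fun m hm => absurd hm (Finset.notMem_empty m), ?_⟩
    intro e heS _
    exfalso
    have hTe : S \ R = ∅ := Finset.card_eq_zero.mp (Nat.le_zero.mp hcard)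
    have heR : e ∈ R := by
      by_contra h
      have : e ∈ S \ R := Finset.mem_sdiff.mpr ⟨heS, h⟩
      simp [hTe] at this
    obtain ⟨m, hm, -⟩ := hinv e heR
    simp [hTe] at hm
  | succ n ih =>
    intro R hRS hcard hinv
    set T : Finset F := S \ R with hT
    set Mins : Finset F := T.filter (fun m => ∀ e' ∈ T, l e' = l m → C0 m ≤ C0 e') with hMins
    set Rej : Finset F := Mins.filter (fun e => ∃ m ∈ Mins, r m = r e ∧ C0 e < C0 m) with hRej
    -- upgrade a witness to a maximal one
    have upgrade : ∀ e : F, (∃ m ∈ Mins, r m = r e ∧ C0 e < C0 m) →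
        ∃ m ∈ Mins, m ∉ Rej ∧ r m = r e ∧ C0 e < C0 m := by
      intro e he
      obtain ⟨m, hmM, hmr, hmc⟩ := he
      have hne : (Mins.filter (fun m' => r m' = r e)).Nonempty :=
        ⟨m, Finset.mem_filter.mpr ⟨hmM, hmr⟩⟩
      obtain ⟨ms, hms, hmax⟩ := Finset.exists_max_image _ C0 hne
      rw [Finset.mem_filter] at hms
      refine ⟨ms, hms.1, ?_, hms.2, lt_of_lt_of_le hmc (hmax m (Finset.mem_filter.mpr ⟨hmM, hmr⟩))⟩
      intro hRejms
      rw [hRej, Finset.mem_filter] at hRejms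
      obtain ⟨-, m', hm'M, hm'r, hm'c⟩ := hRejms
      have : m' ∈ Mins.filter (fun m' => r m' = r e) :=
        Finset.mem_filter.mpr ⟨hm'M, by rw [hm'r, hms.2]⟩
      exact absurd (hmax m' this) (by omega)
    by_cases hRejE : Rej = ∅
    · -- M := Mins works
      have hMinsS : Mins ⊆ S := fun m hm =>
        (Finset.mem_sdiff.mp (Finset.mem_filter.mp hm).1).1
      refine ⟨Mins, hMinsS, ?_, ?_⟩
      · intro m hm m' hm' hne
        have hmT := Finset.mem_filter.mp hm
        have hm'T := Finset.mem_filter.mp hm'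
        constructor
        · intro hll
          have h1 := hmT.2 m' hm'T.1 hll.symm
          have h2 := hm'T.2 m hmT.1 hll
          exact hne (hL m m' hll (le_antisymm h1 h2))
        · intro hrr
          have hCne : C0 m ≠ C0 m' := fun h => hne (hR m m' hrr h)
          rcases lt_or_gt_of_ne hCne with h | h
          · have : m ∈ Rej := Finset.mem_filter.mpr ⟨hm, m', hm', hrr.symm, h⟩
            simp [hRejE] at this
          · have : m' ∈ Rej := Finset.mem_filter.mpr ⟨hm', m, hm, hrr, h⟩
            simp [hRejE] at this
      · intro e heS heM
        by_cases heR : e ∈ R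
        · obtain ⟨m, hmT, hmr, hmc, hmmin⟩ := hinv e heR
          have hmMins : m ∈ Mins := Finset.mem_filter.mpr ⟨hmT, hmmin⟩
          have hmne : m ≠ e := by
            intro h; subst h
            exact (Finset.mem_sdiff.mp hmT).2 heR
          exact ⟨m, hmMins, hmne, Or.inr ⟨hmr, hmc⟩⟩
        · have heT : e ∈ T := Finset.mem_sdiff.mpr ⟨heS, heR⟩
          -- e not a min at its left; take the min there
          have hne : (T.filter (fun e' => l e' = l e)).Nonempty :=
            ⟨e, Finset.mem_filter.mpr ⟨heT, rfl⟩⟩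
          obtain ⟨m, hm, hmin⟩ := Finset.exists_min_image _ C0 hne
          rw [Finset.mem_filter] at hm
          have hmMins : m ∈ Mins := by
            refine Finset.mem_filter.mpr ⟨hm.1, ?_⟩
            intro e' he' hll
            exact hmin e' (Finset.mem_filter.mpr ⟨he', by rw [hll, hm.2]⟩)
          have heNotMins : e ∉ Mins := fun h => heM h
          have : ∃ e' ∈ T, l e' = l e ∧ C0 e' < C0 e := by
            by_contra h
            push_neg at h
            exact heNotMins (Finset.mem_filter.mpr ⟨heT, fun e' he' hll =>
              le_of_not_gt (fun hlt => absurd hll (by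
                intro hl2
                exact absurd hlt (not_lt.mpr (by
                  have := h e' he' hl2
                  omega))))⟩)
          obtain ⟨e', he'T, he'l, he'c⟩ := this
          have hmc : C0 m < C0 e :=
            lt_of_le_of_lt (hmin e' (Finset.mem_filter.mpr ⟨he'T, he'l⟩)) he'c
          have hmne : m ≠ e := fun h => by subst h; omega
          exact ⟨m, hmMins, hmne, Or.inl ⟨hm.2, hmc⟩⟩
    · -- recurse with R' = R ∪ Rej
      have hRejT : Rej ⊆ T := fun e he =>
        (Finset.mem_filter.mp (Finset.mem_filter.mp he).1).1
      have hRejS : Rej ⊆ S := fun e he => (Finset.mem_sdiff.mp (hRejT he)).1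
      have hdisj : Disjoint R Rej := by
        rw [Finset.disjoint_left]
        intro a haR haRej
        exact (Finset.mem_sdiff.mp (hRejT haRej)).2 haR
      have hsub : S \ (R ∪ Rej) ⊆ S \ R := by
        intro a ha
        rw [Finset.mem_sdiff] at ha ⊢
        exact ⟨ha.1, fun h => ha.2 (Finset.mem_union_left _ h)⟩
      have hcard' : (S \ (R ∪ Rej)).card ≤ n := by
        have hpss : S \ (R ∪ Rej) ⊂ S \ R := by
          refine Finset.ssubset_iff_of_subset hsub |>.mpr ?_
          obtain ⟨x, hx⟩ := Finset.nonempty_iff_ne_empty.mpr hRejE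
          refine ⟨x, hRejT hx, ?_⟩
          rw [Finset.mem_sdiff]
          rintro ⟨-, h⟩
          exact h (Finset.mem_union_right _ hx)
        have h1 := Finset.card_lt_card hpss
        have h2 : (S \ R).card ≤ n + 1 := by rw [← hT]; exact hcard
        omega
      refine ih (R ∪ Rej) (Finset.union_subset hRS hRejS) hcard' ?_
      intro e heR'
      have key : ∃ m ∈ Mins, r m = r e ∧ C0 e < C0 m := by
        rcases Finset.mem_union.mp heR' with heR | heRej
        · obtain ⟨m, hmT, hmr, hmc, hmmin⟩ := hinv e heR
          exact ⟨m, Finset.mem_filter.mpr ⟨hmT, hmmin⟩, hmr, hmc⟩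
        · exact (Finset.mem_filter.mp heRej).2
      obtain ⟨m, hmMins, hmNotRej, hmr, hmc⟩ := upgrade e key
      have hmT : m ∈ T := (Finset.mem_filter.mp hmMins).1
      refine ⟨m, ?_, hmr, hmc, ?_⟩
      · rw [Finset.mem_sdiff]
        refine ⟨(Finset.mem_sdiff.mp hmT).1, ?_⟩
        rw [Finset.mem_union]
        rintro (h | h)
        · exact (Finset.mem_sdiff.mp hmT).2 h
        · exact hmNotRej h
      · intro e' he' hll
        exact (Finset.mem_filter.mp hmMins).2 e' (hsub he') hll

lemma kernel (l r : F → W) (C0 : F → ℕ)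
    (hL : ∀ e e', l e = l e' → C0 e = C0 e' → e = e')
    (hR : ∀ e e', r e = r e' → C0 e = C0 e' → e = e')
    (S : Finset F) :
    ∃ M ⊆ S, (∀ m ∈ M, ∀ m' ∈ M, m ≠ m' → l m ≠ l m' ∧ r m ≠ r m') ∧
      ∀ e ∈ S, e ∉ M → ∃ m ∈ M, dom l r C0 m e :=
  kernel_aux l r C0 hL hR S (S \ ∅).card ∅ (Finset.empty_subset _) le_rfl (by simp)


lemma listColor_aux (l r : F → W) (C0 : F → ℕ)
    (hL : ∀ e e', l e = l e' → C0 e = C0 e' → e = e')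
    (hR : ∀ e e', r e = r e' → C0 e = C0 e' → e = e') :
    ∀ n (S : Finset F) (L : F → Finset ℕ), S.card ≤ n →
      (∀ e ∈ S, (S.filter (fun m => dom l r C0 m e)).card < (L e).card) →
      ∃ C : F → ℕ, (∀ e ∈ S, C e ∈ L e) ∧
        ∀ e ∈ S, ∀ e' ∈ S, e ≠ e' → C e = C e' → l e ≠ l e' ∧ r e ≠ r e' := by
  intro n
  induction n with
  | zero =>
    intro S L hcard _
    have : S = ∅ := Finset.card_eq_zero.mp (Nat.le_zero.mp hcard)
    subst this
    exact ⟨fun _ => 0, by simp, by simp⟩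
  | succ n ih =>
    intro S L hcard hout
    rcases Finset.eq_empty_or_nonempty S with hS | ⟨estar, hestar⟩
    · subst hS
      exact ⟨fun _ => 0, by simp, by simp⟩
    · -- pick a color α in L estar
      have hLne : (L estar).Nonempty := by
        have := hout estar hestar
        exact Finset.card_pos.mp (by omega)
      obtain ⟨α, hα⟩ := hLne
      set Sα : Finset F := S.filter (fun e => α ∈ L e) with hSα
      obtain ⟨M, hMsub, hMmatch, hMdom⟩ := kernel l r C0 hL hR Sα
      have hMS : M ⊆ S := fun m hm => (Finset.mem_filter.mp (hMsub hm)).1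
      have hMne : M.Nonempty := by
        by_contra h
        rw [Finset.not_nonempty_iff_eq_empty] at h
        have hes : estar ∈ Sα := Finset.mem_filter.mpr ⟨hestar, hα⟩
        have := hMdom estar hes (by simp [h])
        simp [h] at this
      set S' : Finset F := S \ M with hS'
      set L' : (F → Finset ℕ) := fun e => (L e).erase α with hL'
      have hS'card : S'.card ≤ n := by
        have hpss : S' ⊂ S := by
          refine Finset.ssubset_iff_of_subset (Finset.sdiff_subset) |>.mpr ?_
          obtain ⟨m, hm⟩ := hMne
          exact ⟨m, hMS hm, by simp [hS', hm]⟩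
        have := Finset.card_lt_card hpss
        omega
      have hout' : ∀ e ∈ S', (S'.filter (fun m => dom l r C0 m e)).card < (L' e).card := by
        intro e heS'
        have heS : e ∈ S := (Finset.mem_sdiff.mp heS').1
        have hsubf : S'.filter (fun m => dom l r C0 m e) ⊆ S.filter (fun m => dom l r C0 m e) :=
          Finset.filter_subset_filter _ Finset.sdiff_subset
        by_cases heα : α ∈ L e
        · -- e ∈ Sα; it is dominated by some removed m ∈ M (or e ∈ M, but e ∈ S' so e ∉ M)
          have heSα : e ∈ Sα := Finset.mem_filter.mpr ⟨heS, heα⟩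
          have heM : e ∉ M := (Finset.mem_sdiff.mp heS').2
          obtain ⟨m, hmM, hmdom⟩ := hMdom e heSα heM
          have hm1 : m ∈ S.filter (fun m => dom l r C0 m e) :=
            Finset.mem_filter.mpr ⟨hMS hmM, hmdom⟩
          have hm2 : m ∉ S'.filter (fun m => dom l r C0 m e) := by
            simp only [hS', Finset.mem_filter, Finset.mem_sdiff]
            rintro ⟨⟨-, h⟩, -⟩
            exact h hmM
          have hlt : (S'.filter (fun m => dom l r C0 m e)).card <
              (S.filter (fun m => dom l r C0 m e)).card :=
            Finset.card_lt_card (Finset.ssubset_iff_of_subset hsubf |>.mpr ⟨m, hm1, hm2⟩)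
          have h1 := hout e heS
          have h2 : (L' e).card = (L e).card - 1 := by
            simp [hL', Finset.card_erase_of_mem heα]
          have h3 : 1 ≤ (L e).card := Finset.card_pos.mpr ⟨α, heα⟩
          omega
        · have h2 : (L' e).card = (L e).card := by
            simp [hL', Finset.erase_eq_of_notMem heα]
          have := hout e heS
          have := Finset.card_le_card hsubf
          omega
      obtain ⟨C', hC'mem, hC'prop⟩ := ih S' L' hS'card hout'
      refine ⟨fun e => if e ∈ M then α else C' e, ?_, ?_⟩
      · intro e heS
        by_cases heM : e ∈ M
        · simp only [heM, if_true]
          exact (Finset.mem_filter.mp (hMsub heM)).2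
        · simp only [heM, if_false]
          have heS' : e ∈ S' := Finset.mem_sdiff.mpr ⟨heS, heM⟩
          exact Finset.mem_of_mem_erase (hC'mem e heS')
      · intro e heS e' he'S hne hCeq
        by_cases heM : e ∈ M <;> by_cases he'M : e' ∈ M
        · exact hMmatch e heM e' he'M hne
        · exfalso
          simp only [heM, he'M, if_true, if_false] at hCeq
          have he'S' : e' ∈ S' := Finset.mem_sdiff.mpr ⟨he'S, he'M⟩
          have := hC'mem e' he'S'
          rw [← hCeq] at this
          exact Finset.notMem_erase α _ this
        · exfalso
          simp only [heM, he'M, if_true, if_false] at hCeq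
          have heS' : e ∈ S' := Finset.mem_sdiff.mpr ⟨heS, heM⟩
          have := hC'mem e heS'
          rw [hCeq] at this
          exact Finset.notMem_erase α _ this
        · simp only [heM, he'M, if_false] at hCeq
          exact hC'prop e (Finset.mem_sdiff.mpr ⟨heS, heM⟩) e'
            (Finset.mem_sdiff.mpr ⟨he'S, he'M⟩) hne hCeq

/-- The abstract Galvin lemma. -/
lemma listColor (l r : F → W) (C0 : F → ℕ) (k : ℕ)
    (hk : ∀ e, C0 e < k)
    (hL : ∀ e e', l e = l e' → C0 e = C0 e' → e = e')
    (hR : ∀ e e', r e = r e' → C0 e = C0 e' → e = e')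
    (L : F → Finset ℕ) (hcard : ∀ e, k ≤ (L e).card) :
    ∃ C : F → ℕ, (∀ e, C e ∈ L e) ∧
      ∀ e e', e ≠ e' → C e = C e' → l e ≠ l e' ∧ r e ≠ r e' := by
  have hout : ∀ e ∈ (Finset.univ : Finset F),
      ((Finset.univ : Finset F).filter (fun m => dom l r C0 m e)).card < (L e).card := by
    intro e _
    have hsplit : (Finset.univ : Finset F).filter (fun m => dom l r C0 m e) ⊆
        ((Finset.univ : Finset F).filter (fun m => l m = l e ∧ C0 m < C0 e)) ∪
        ((Finset.univ : Finset F).filter (fun m => r m = r e ∧ C0 e < C0 m)) := by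
      intro m hm
      obtain ⟨-, h⟩ := Finset.mem_filter.mp hm
      rcases h.2 with h' | h'
      · exact Finset.mem_union_left _ (Finset.mem_filter.mpr ⟨Finset.mem_univ m, h'⟩)
      · exact Finset.mem_union_right _ (Finset.mem_filter.mpr ⟨Finset.mem_univ m, h'⟩)
    have c1 : ((Finset.univ : Finset F).filter (fun m => l m = l e ∧ C0 m < C0 e)).card ≤
        C0 e := by
      have : ((Finset.univ : Finset F).filter (fun m => l m = l e ∧ C0 m < C0 e)).card ≤
          (Finset.range (C0 e)).card := by
        apply Finset.card_le_card_of_injOn C0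
        · intro m hm
          rw [Finset.mem_coe] at hm ⊢
          rw [Finset.mem_filter] at hm
          exact Finset.mem_range.mpr hm.2.2
        · intro a ha b hb hab
          rw [Finset.mem_coe, Finset.mem_filter] at ha hb
          exact hL a b (ha.2.1.trans hb.2.1.symm) hab
      simpa using this
    have c2 : ((Finset.univ : Finset F).filter (fun m => r m = r e ∧ C0 e < C0 m)).card ≤
        k - 1 - C0 e := by
      have : ((Finset.univ : Finset F).filter (fun m => r m = r e ∧ C0 e < C0 m)).card ≤
          (Finset.Ioo (C0 e) k).card := by
        apply Finset.card_le_card_of_injOn C0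
        · intro m hm
          rw [Finset.mem_coe] at hm ⊢
          rw [Finset.mem_filter] at hm
          exact Finset.mem_Ioo.mpr ⟨hm.2.2, hk m⟩
        · intro a ha b hb hab
          rw [Finset.mem_coe, Finset.mem_filter] at ha hb
          exact hR a b (ha.2.1.trans hb.2.1.symm) hab
      have : (Finset.Ioo (C0 e) k).card = k - (C0 e) - 1 := by
        rw [Nat.card_Ioo]
      omega
    have := Finset.card_union_le
      ((Finset.univ : Finset F).filter (fun m => l m = l e ∧ C0 m < C0 e))
      ((Finset.univ : Finset F).filter (fun m => r m = r e ∧ C0 e < C0 m))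
    have hce := hk e
    have hcL := hcard e
    have := Finset.card_le_card hsplit
    omega
  obtain ⟨C, h1, h2⟩ := listColor_aux l r C0 hL hR Finset.univ.card Finset.univ L le_rfl hout
  exact ⟨C, fun e => h1 e (Finset.mem_univ e),
    fun e e' => h2 e (Finset.mem_univ e) e' (Finset.mem_univ e')⟩


lemma mult_mk (v a b : V) : mult v s(a, b) =
    (if a = v then 1 else 0) + (if b = v then 1 else 0) := rfl

/-- walk along the orientation -/
def Walk (D : F → V × V) : V → List F → V → Prop
  | u, [], v => u = v
  | u, e :: es, v => (D e).1 = u ∧ Walk D (D e).2 es v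

lemma walk_append {D : F → V × V} :
    ∀ (xs ys : List F) (u v : V), Walk D u (xs ++ ys) v ↔
      ∃ w, Walk D u xs w ∧ Walk D w ys v := by
  intro xs
  induction xs with
  | nil =>
    intro ys u v
    constructor
    · intro h; exact ⟨u, rfl, h⟩
    · rintro ⟨w, hw, h⟩; cases hw; exact h
  | cons e es ih =>
    intro ys u v
    constructor
    · rintro ⟨h1, h2⟩
      obtain ⟨w, hw1, hw2⟩ := (ih ys _ v).mp h2
      exact ⟨w, ⟨h1, hw1⟩, hw2⟩
    · rintro ⟨w, ⟨h1, hw1⟩, hw2⟩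
      exact ⟨h1, (ih ys _ v).mpr ⟨w, hw1, hw2⟩⟩

lemma walk_dedup {D : F → V × V} :
    ∀ (es : List F) (u v : V), Walk D u es v →
      ∃ es', Walk D u es' v ∧ es'.Nodup := by
  intro es
  induction es with
  | nil => intro u v h; exact ⟨[], h, List.nodup_nil⟩
  | cons e es ih =>
    intro u v h
    obtain ⟨h1, h2⟩ := h
    obtain ⟨es', hw, hnd⟩ := ih _ v h2
    by_cases he : e ∈ es'
    · obtain ⟨as, bs, rfl⟩ := List.append_of_mem he
      obtain ⟨w, hwa, hwb⟩ := (walk_append as (e :: bs) _ v).mp hw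
      obtain ⟨hb1, hb2⟩ := hwb
      refine ⟨e :: bs, ⟨h1, hb2⟩, ?_⟩
      have := List.Nodup.of_append_right hnd
      exact this
    · exact ⟨e :: es', ⟨h1, hw⟩, List.nodup_cons.mpr ⟨he, hnd⟩⟩

/-- Edge-count difference along a walk. -/
lemma walk_count {D : F → V × V} :
    ∀ (es : List F) (u v : V), Walk D u es v → ∀ w : V,
      ((es.filter (fun e => decide ((D e).1 = w))).length : ℤ) -
        (es.filter (fun e => decide ((D e).2 = w))).length =
      (if u = w then 1 else 0) - (if v = w then 1 else 0) := by
  intro es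
  induction es with
  | nil =>
    intro u v h w
    cases h
    simp
  | cons e es ih =>
    intro u v h w
    obtain ⟨h1, h2⟩ := h
    subst h1
    have hih := ih _ v h2 w
    by_cases ht : (D e).1 = w <;> by_cases hh : (D e).2 = w <;> by_cases hv : v = w <;>
      simp [List.filter_cons, ht, hh, hv] at hih ⊢ <;>
      omega

lemma count_conv {p : F → Prop} [DecidablePred p] {es : List F} (hnd : es.Nodup) :
    (Finset.univ.filter (fun e => e ∈ es ∧ p e)).card =
      (es.filter (fun e => decide (p e))).length := by
  have h1 : (es.filter (fun e => decide (p e))).length =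
      (es.filter (fun e => decide (p e))).toFinset.card := by
    rw [List.toFinset_card_of_nodup (hnd.filter _)]
  rw [h1]
  congr 1
  ext x
  simp [List.mem_filter, and_comm]

lemma sum_indeg_filter (D : F → V × V) (R : Finset V) :
    ∑ u ∈ R, inDeg D u = (Finset.univ.filter (fun e => (D e).2 ∈ R)).card := by
  rw [Finset.card_eq_sum_card_fiberwise (f := fun e => (D e).2) (s := Finset.univ.filter (fun e => (D e).2 ∈ R)) (t := R)
    (fun e he => (Finset.mem_filter.mp he).2)]
  apply Finset.sum_congr rfl
  intro u hu
  unfold inDeg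
  congr 1
  ext e
  simp only [Finset.mem_filter, Finset.mem_univ, true_and]
  exact ⟨fun h => ⟨h ▸ hu, h⟩, fun h => h.2⟩

lemma sum_outdeg_filter (D : F → V × V) (R : Finset V) :
    ∑ u ∈ R, outDeg D u = (Finset.univ.filter (fun e => (D e).1 ∈ R)).card := by
  rw [Finset.card_eq_sum_card_fiberwise (f := fun e => (D e).1) (s := Finset.univ.filter (fun e => (D e).1 ∈ R)) (t := R)
    (fun e he => (Finset.mem_filter.mp he).2)]
  apply Finset.sum_congr rfl
  intro u hu
  unfold outDeg
  congr 1
  ext e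
  simp only [Finset.mem_filter, Finset.mem_univ, true_and]
  exact ⟨fun h => ⟨h ▸ hu, h⟩, fun h => h.2⟩

lemma inDeg_add_outDeg (ends : F → Sym2 V) (D : F → V × V)
    (hD : ∀ e, Sym2.mk (D e).1 (D e).2 = ends e) (v : V) :
    inDeg D v + outDeg D v = degree ends v := by
  unfold inDeg outDeg degree
  rw [Finset.card_filter, Finset.card_filter, ← Finset.sum_add_distrib]
  apply Finset.sum_congr rfl
  intro e _
  rw [← hD e]
  have : Sym2.mk (D e).1 (D e).2 = s((D e).1, (D e).2) := rfl
  rw [this, mult_mk]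
  omega

/-- The inDeg of the flipped orientation. -/
lemma flip_indeg (D : F → V × V) (es : List F) (hnd : es.Nodup) (w : V) :
    (inDeg (fun e => if e ∈ es then Prod.swap (D e) else D e) w : ℤ) =
      (inDeg D w : ℤ)
        + (es.filter (fun e => decide ((D e).1 = w))).length
        - (es.filter (fun e => decide ((D e).2 = w))).length := by
  unfold inDeg
  have split : ∀ (G : F → V × V), (Finset.univ.filter (fun e => (G e).2 = w)).card =
      (Finset.univ.filter (fun e => e ∈ es ∧ (G e).2 = w)).card +
      (Finset.univ.filter (fun e => ¬ (e ∈ es) ∧ (G e).2 = w)).card := by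
    intro G
    rw [← Finset.card_union_of_disjoint]
    · congr 1
      ext e
      simp only [Finset.mem_filter, Finset.mem_union, Finset.mem_univ, true_and]
      tauto
    · rw [Finset.disjoint_left]
      intro a ha hb
      rw [Finset.mem_filter] at ha hb
      exact hb.2.1 ha.2.1
  rw [split, split]
  have e1 : (Finset.univ.filter (fun e =>
      e ∈ es ∧ ((if e ∈ es then Prod.swap (D e) else D e)).2 = w)) =
      (Finset.univ.filter (fun e => e ∈ es ∧ (D e).1 = w)) := by
    ext e
    simp only [Finset.mem_filter, Finset.mem_univ, true_and, and_congr_right_iff]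
    intro h
    simp [h]
  have e2 : (Finset.univ.filter (fun e =>
      ¬ (e ∈ es) ∧ ((if e ∈ es then Prod.swap (D e) else D e)).2 = w)) =
      (Finset.univ.filter (fun e => ¬ (e ∈ es) ∧ (D e).2 = w)) := by
    ext e
    simp only [Finset.mem_filter, Finset.mem_univ, true_and, and_congr_right_iff]
    intro h
    simp [h]
  rw [e1, e2]
  have c1 : (Finset.univ.filter (fun e => e ∈ es ∧ (D e).1 = w)).card =
      (es.filter (fun e => decide ((D e).1 = w))).length := count_conv hnd
  have c2 : (Finset.univ.filter (fun e => e ∈ es ∧ (D e).2 = w)).card =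
      (es.filter (fun e => decide ((D e).2 = w))).length := count_conv hnd
  omega

lemma flip_outdeg (D : F → V × V) (es : List F) (hnd : es.Nodup) (w : V) :
    (outDeg (fun e => if e ∈ es then Prod.swap (D e) else D e) w : ℤ) =
      (outDeg D w : ℤ)
        + (es.filter (fun e => decide ((D e).2 = w))).length
        - (es.filter (fun e => decide ((D e).1 = w))).length := by
  unfold outDeg
  have split : ∀ (G : F → V × V), (Finset.univ.filter (fun e => (G e).1 = w)).card =
      (Finset.univ.filter (fun e => e ∈ es ∧ (G e).1 = w)).card +
      (Finset.univ.filter (fun e => ¬ (e ∈ es) ∧ (G e).1 = w)).card := by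
    intro G
    rw [← Finset.card_union_of_disjoint]
    · congr 1
      ext e
      simp only [Finset.mem_filter, Finset.mem_union, Finset.mem_univ, true_and]
      tauto
    · rw [Finset.disjoint_left]
      intro a ha hb
      rw [Finset.mem_filter] at ha hb
      exact hb.2.1 ha.2.1
  rw [split, split]
  have e1 : (Finset.univ.filter (fun e =>
      e ∈ es ∧ ((if e ∈ es then Prod.swap (D e) else D e)).1 = w)) =
      (Finset.univ.filter (fun e => e ∈ es ∧ (D e).2 = w)) := by
    ext e
    simp only [Finset.mem_filter, Finset.mem_univ, true_and, and_congr_right_iff]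
    intro h
    simp [h]
  have e2 : (Finset.univ.filter (fun e =>
      ¬ (e ∈ es) ∧ ((if e ∈ es then Prod.swap (D e) else D e)).1 = w)) =
      (Finset.univ.filter (fun e => ¬ (e ∈ es) ∧ (D e).1 = w)) := by
    ext e
    simp only [Finset.mem_filter, Finset.mem_univ, true_and, and_congr_right_iff]
    intro h
    simp [h]
  rw [e1, e2]
  have c1 : (Finset.univ.filter (fun e => e ∈ es ∧ (D e).1 = w)).card =
      (es.filter (fun e => decide ((D e).1 = w))).length := count_conv hnd
  have c2 : (Finset.univ.filter (fun e => e ∈ es ∧ (D e).2 = w)).card =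
      (es.filter (fun e => decide ((D e).2 = w))).length := count_conv hnd
  omega


lemma mk_swap (p : V × V) : Sym2.mk (Prod.swap p).1 (Prod.swap p).2 = Sym2.mk p.1 p.2 := by
  cases p with
  | mk a b => exact (Sym2.eq_swap).symm

def Phi (D : F → V × V) : ℕ := ∑ v : V, ((inDeg D v : ℤ) - outDeg D v).natAbs ^ 2

lemma PhiZ (D : F → V × V) : (Phi D : ℤ) = ∑ v : V, ((inDeg D v : ℤ) - outDeg D v) ^ 2 := by
  unfold Phi
  push_cast
  apply Finset.sum_congr rfl
  intro v _
  exact sq_abs _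

lemma rtg_walk (D : F → V × V) {a b : V}
    (h : Relation.ReflTransGen (fun x y => ∃ e, D e = (x, y)) a b) :
    ∃ es, Walk D a es b := by
  induction h using Relation.ReflTransGen.head_induction_on with
  | refl => exact ⟨[], rfl⟩
  | head harc _ ih =>
    obtain ⟨e, he⟩ := harc
    obtain ⟨es, hes⟩ := ih
    refine ⟨e :: es, ?_, ?_⟩
    · rw [he]
    · rw [he]; exact hes

lemma min_claim (ends : F → Sym2 V) (D : F → V × V)
    (hD : ∀ e, Sym2.mk (D e).1 (D e).2 = ends e)
    (hmin : ∀ D', (∀ e, Sym2.mk (D' e).1 (D' e).2 = ends e) → Phi D ≤ Phi D') (v : V) :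
    inDeg D v ≤ outDeg D v + 1 := by
  by_contra hcon
  push_neg at hcon
  set arc : V → V → Prop := fun x y => ∃ e, D e = (x, y) with harc
  set R : Finset V := Finset.univ.filter (fun u => Relation.ReflTransGen arc u v) with hR
  have hvR : v ∈ R := Finset.mem_filter.mpr ⟨Finset.mem_univ v, Relation.ReflTransGen.refl⟩
  have hsum : ∑ u ∈ R, inDeg D u ≤ ∑ u ∈ R, outDeg D u := by
    rw [sum_indeg_filter, sum_outdeg_filter]
    apply Finset.card_le_card
    intro e he
    rw [Finset.mem_filter] at he ⊢
    refine ⟨he.1, ?_⟩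
    rw [hR, Finset.mem_filter] at he ⊢
    refine ⟨Finset.mem_univ _, ?_⟩
    exact Relation.ReflTransGen.head ⟨e, rfl⟩ he.2.2
  have hex : ∃ u ∈ R, inDeg D u < outDeg D u := by
    by_contra hall
    push_neg at hall
    have : ∑ u ∈ R, outDeg D u < ∑ u ∈ R, inDeg D u :=
      Finset.sum_lt_sum (fun u hu => hall u hu) ⟨v, hvR, by omega⟩
    omega
  obtain ⟨u, huR, hult⟩ := hex
  have huv : u ≠ v := by intro h; subst h; omega
  obtain ⟨es0, hw0⟩ := rtg_walk D ((Finset.mem_filter.mp huR).2)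
  obtain ⟨es, hwalk, hnd⟩ := walk_dedup es0 u v hw0
  set D' : F → V × V := fun e => if e ∈ es then Prod.swap (D e) else D e with hD'
  have hvalid' : ∀ e, Sym2.mk (D' e).1 (D' e).2 = ends e := by
    intro e
    rw [hD']
    by_cases he : e ∈ es <;> simp only [he, if_true, if_false]
    · rw [mk_swap]; exact hD e
    · exact hD e
  -- the in-out difference changes only at u and v
  have hkey : ∀ w, ((inDeg D' w : ℤ) - outDeg D' w) =
      ((inDeg D w : ℤ) - outDeg D w)
        + 2 * (if u = w then 1 else 0) - 2 * (if v = w then 1 else 0) := by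
    intro w
    have h1 := flip_indeg D es hnd w
    have h2 := flip_outdeg D es hnd w
    have h3 := walk_count es u v hwalk w
    rw [hD']
    omega
  have hPhiLt : Phi D' < Phi D := by
    have hz : (Phi D' : ℤ) < (Phi D : ℤ) := by
      rw [PhiZ, PhiZ]
      have hsplit : ∀ (G : F → V × V), ∑ w : V, ((inDeg G w : ℤ) - outDeg G w) ^ 2 =
          ∑ w ∈ ({u, v} : Finset V), ((inDeg G w : ℤ) - outDeg G w) ^ 2 +
          ∑ w ∈ (Finset.univ \ {u, v} : Finset V), ((inDeg G w : ℤ) - outDeg G w) ^ 2 := by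
        intro G
        rw [← Finset.sum_union (Finset.disjoint_sdiff)]
        congr 1
        rw [Finset.union_sdiff_of_subset (Finset.subset_univ _)]
      rw [hsplit D, hsplit D']
      have heq : ∑ w ∈ (Finset.univ \ {u, v} : Finset V), ((inDeg D' w : ℤ) - outDeg D' w) ^ 2 =
          ∑ w ∈ (Finset.univ \ {u, v} : Finset V), ((inDeg D w : ℤ) - outDeg D w) ^ 2 := by
        apply Finset.sum_congr rfl
        intro w hw
        rw [Finset.mem_sdiff, Finset.mem_insert, Finset.mem_singleton] at hw
        push_neg at hw
        have := hkey w
        rw [if_neg (fun h => hw.2.1 h.symm), if_neg (fun h => hw.2.2 h.symm)] at this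
        rw [this]
        ring
      rw [heq]
      have hsum2 : ∀ (G : F → V × V), ∑ w ∈ ({u, v} : Finset V),
          ((inDeg G w : ℤ) - outDeg G w) ^ 2 =
          ((inDeg G u : ℤ) - outDeg G u) ^ 2 + ((inDeg G v : ℤ) - outDeg G v) ^ 2 := by
        intro G
        rw [Finset.sum_pair huv]
      rw [hsum2 D, hsum2 D']
      have hku := hkey u
      have hkv := hkey v
      rw [if_pos rfl, if_neg (Ne.symm huv)] at hku
      rw [if_neg huv, if_pos rfl] at hkv
      have hsu : (inDeg D u : ℤ) - outDeg D u ≤ -1 := by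
        have : (inDeg D u : ℤ) < outDeg D u := by exact_mod_cast hult
        omega
      have hsv : (2 : ℤ) ≤ (inDeg D v : ℤ) - outDeg D v := by
        have : (outDeg D v : ℤ) + 1 < inDeg D v := by exact_mod_cast hcon
        omega
      nlinarith [hku, hkv, hsu, hsv]
    exact_mod_cast hz
  exact absurd (hmin D' hvalid') (by omega)

/-- Every finite multigraph has a balanced orientation. -/
theorem balanced (ends : F → Sym2 V) :
    ∃ D : F → V × V, (∀ e, Sym2.mk (D e).1 (D e).2 = ends e) ∧
      ∀ v, 2 * inDeg D v ≤ degree ends v + 1 ∧ 2 * outDeg D v ≤ degree ends v + 1 := by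
  have hne : ∃ n : ℕ, ∃ D : F → V × V, (∀ e, Sym2.mk (D e).1 (D e).2 = ends e) ∧ Phi D = n := by
    have : ∀ e : F, ∃ p : V × V, Sym2.mk p.1 p.2 = ends e := by
      intro e
      induction ends e using Sym2.ind with
      | _ x y => exact ⟨(x, y), rfl⟩
    choose D0 hD0 using this
    exact ⟨Phi D0, D0, hD0, rfl⟩
  obtain ⟨D, hval, hPhi⟩ := Nat.sInf_mem hne
  have hmin : ∀ D', (∀ e, Sym2.mk (D' e).1 (D' e).2 = ends e) → Phi D ≤ Phi D' := by
    intro D' hval'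
    rw [hPhi]
    exact Nat.sInf_le ⟨D', hval', rfl⟩
  clear hPhi hne
  refine ⟨D, hval, ?_⟩
  intro v
  have h1 : inDeg D v ≤ outDeg D v + 1 := min_claim ends D hval hmin v
  have hvalsw : ∀ e, Sym2.mk ((Prod.swap ∘ D) e).1 ((Prod.swap ∘ D) e).2 = ends e := by
    intro e
    rw [Function.comp_apply, mk_swap]
    exact hval e
  have hin : ∀ w, inDeg (Prod.swap ∘ D) w = outDeg D w := fun w => rfl
  have hout : ∀ w, outDeg (Prod.swap ∘ D) w = inDeg D w := fun w => rfl
  have hPhisw : Phi (Prod.swap ∘ D) = Phi D := by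
    unfold Phi
    apply Finset.sum_congr rfl
    intro w _
    rw [hin w, hout w,
      show ((outDeg D w : ℤ) - inDeg D w).natAbs = ((inDeg D w : ℤ) - outDeg D w).natAbs
        from by omega]
  have hminsw : ∀ D', (∀ e, Sym2.mk (D' e).1 (D' e).2 = ends e) → Phi (Prod.swap ∘ D) ≤ Phi D' := by
    intro D' h
    rw [hPhisw]
    exact hmin D' h
  have h2 := min_claim ends (Prod.swap ∘ D) hvalsw hminsw v
  rw [hin v, hout v] at h2
  have h3 := inDeg_add_outDeg ends D hval v
  clear hminsw hPhisw hin hout hvalsw hmin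
  omega




lemma degree_sub_eq {F : Type} [Fintype F] (ends : F → Sym2 V) (Q : F → Prop)
    [DecidablePred Q] [Fintype (Subtype Q)] (v : V) :
    degree (subEnds ends Q) v = ∑ e ∈ Finset.univ.filter Q, mult v (ends e) := by
  unfold degree subEnds
  exact (Finset.sum_subtype (Finset.univ.filter Q)
    (fun x => by simp only [Finset.mem_filter, Finset.mem_univ, true_and])
    (fun e => mult v (ends e))).symm

lemma slot_inj {F : Type} [Fintype F] {κ : Type} [DecidableEq κ] (g : F → κ) (idx : F → ℕ)
    (hidx : Function.Injective idx) (e e' : F) (hg : g e = g e')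
    (hs : (Finset.univ.filter (fun x => g x = g e ∧ idx x < idx e)).card =
          (Finset.univ.filter (fun x => g x = g e' ∧ idx x < idx e')).card) : e = e' := by
  have key : ∀ a b : F, g a = g b → idx a < idx b →
      (Finset.univ.filter (fun x => g x = g a ∧ idx x < idx a)).card <
      (Finset.univ.filter (fun x => g x = g b ∧ idx x < idx b)).card := by
    intro a b hab hlt
    apply Finset.card_lt_card
    rw [Finset.ssubset_iff_of_subset]
    · exact ⟨a, Finset.mem_filter.mpr ⟨Finset.mem_univ a, hab, hlt⟩,
        fun h => by simp at h⟩
    · intro x hx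
      rw [Finset.mem_filter] at hx ⊢
      exact ⟨hx.1, hx.2.1.trans hab, hx.2.2.trans hlt⟩
  rcases lt_trichotomy (idx e) (idx e') with h | h | h
  · exact absurd hs (Nat.ne_of_lt (key e e' hg h))
  · exact hidx h
  · exact absurd hs.symm (Nat.ne_of_lt (key e' e hg.symm h))

lemma slot_lt {F : Type} [Fintype F] {κ : Type} [DecidableEq κ] (g : F → κ) (idx : F → ℕ) (e : F) :
    (Finset.univ.filter (fun x => g x = g e ∧ idx x < idx e)).card <
      (Finset.univ.filter (fun x => g x = g e)).card := by
  apply Finset.card_lt_card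
  rw [Finset.ssubset_iff_of_subset]
  · exact ⟨e, Finset.mem_filter.mpr ⟨Finset.mem_univ e, rfl⟩, fun h => by simp at h⟩
  · intro x hx
    rw [Finset.mem_filter] at hx ⊢
    exact ⟨hx.1, hx.2.1⟩

/-- Assembly lemma: tails/heads with injective slots give list `f`-colorings. -/
lemma assemble (ends : E → Sym2 V) (f : V → ℕ) (k : ℕ)
    (tl hd : E → V) (sl sr : E → ℕ) (C0 : E → ℕ) (a b : V → ℕ)
    (h1 : ∀ e, ends e = s(tl e, hd e))
    (h2a : ∀ e, sl e < a (tl e)) (h2b : ∀ e, sr e < b (hd e))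
    (h3 : ∀ v, a v + b v ≤ f v)
    (h4a : ∀ e e', e ≠ e' → tl e = tl e' → sl e = sl e' → C0 e ≠ C0 e')
    (h4b : ∀ e e', e ≠ e' → hd e = hd e' → sr e = sr e' → C0 e ≠ C0 e')
    (h5 : ∀ e, C0 e < k)
    (L : E → Finset ℕ) (h6 : ∀ e, k ≤ (L e).card) :
    ∃ C : E → ℕ, (∀ e, C e ∈ L e) ∧
      ∀ (c : ℕ) (v : V), degree (subEnds ends fun e => C e = c) v ≤ f v := by
  have hL : ∀ e e', (fun e => (tl e, sl e)) e = (fun e => (tl e, sl e)) e' →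
      C0 e = C0 e' → e = e' := by
    intro e e' hl hc
    by_contra hne
    exact h4a e e' hne (congrArg Prod.fst hl) (congrArg Prod.snd hl) hc
  have hR : ∀ e e', (fun e => (hd e, sr e)) e = (fun e => (hd e, sr e)) e' →
      C0 e = C0 e' → e = e' := by
    intro e e' hl hc
    by_contra hne
    exact h4b e e' hne (congrArg Prod.fst hl) (congrArg Prod.snd hl) hc
  obtain ⟨C, hmem, hdist⟩ :=
    listColor (fun e => (tl e, sl e)) (fun e => (hd e, sr e)) C0 k h5 hL hR L h6
  refine ⟨C, hmem, ?_⟩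
  intro c v
  rw [degree_sub_eq]
  have hmult : ∀ e, mult v (ends e) =
      (if tl e = v then 1 else 0) + (if hd e = v then 1 else 0) := by
    intro e
    rw [h1 e]
    rfl
  rw [Finset.sum_congr rfl (fun e _ => hmult e), Finset.sum_add_distrib]
  have count1 : ∑ e ∈ Finset.univ.filter (fun e => C e = c),
      (if tl e = v then 1 else 0) ≤ a v := by
    rw [← Finset.card_filter]
    have : ((Finset.univ.filter (fun e => C e = c)).filter (fun e => tl e = v)).card
        ≤ (Finset.range (a v)).card := by
      apply Finset.card_le_card_of_injOn sl
      · intro e he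
        rw [Finset.mem_coe] at he ⊢
        rw [Finset.mem_filter, Finset.mem_filter] at he
        rw [Finset.mem_range, ← he.2]
        exact h2a e
      · intro e he e' he' hss
        rw [Finset.mem_coe, Finset.mem_filter, Finset.mem_filter] at he he'
        by_contra hne
        obtain ⟨hll, -⟩ := hdist e e' hne (he.1.2.trans he'.1.2.symm)
        apply hll
        rw [Prod.ext_iff]
        exact ⟨he.2.trans he'.2.symm, hss⟩
    simpa using this
  have count2 : ∑ e ∈ Finset.univ.filter (fun e => C e = c),
      (if hd e = v then 1 else 0) ≤ b v := by
    rw [← Finset.card_filter]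
    have : ((Finset.univ.filter (fun e => C e = c)).filter (fun e => hd e = v)).card
        ≤ (Finset.range (b v)).card := by
      apply Finset.card_le_card_of_injOn sr
      · intro e he
        rw [Finset.mem_coe] at he ⊢
        rw [Finset.mem_filter, Finset.mem_filter] at he
        rw [Finset.mem_range, ← he.2]
        exact h2b e
      · intro e he e' he' hss
        rw [Finset.mem_coe, Finset.mem_filter, Finset.mem_filter] at he he'
        by_contra hne
        obtain ⟨-, hrr⟩ := hdist e e' hne (he.1.2.trans he'.1.2.symm)
        apply hrr
        rw [Prod.ext_iff]
        exact ⟨he.2.trans he'.2.symm, hss⟩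
    simpa using this
  have := h3 v
  omega





lemma hard_bipartite (ends : E → Sym2 V) (f : V → ℕ) (hbip : Bipartite ends) (k : ℕ)
    (C0 : E → Fin k) (hC0 : FColoring ends f C0)
    (L : E → Finset ℕ) (h6 : ∀ e, k ≤ (L e).card) :
    ∃ C : E → ℕ, (∀ e, C e ∈ L e) ∧
      ∀ (c : ℕ) (v : V), degree (subEnds ends fun e => C e = c) v ≤ f v := by
  obtain ⟨P, hP⟩ := hbip
  have hch : ∀ e, ∃ p : V × V, ends e = s(p.1, p.2) ∧ P p.1 ∧ ¬ P p.2 := by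
    intro e
    obtain ⟨u, w, h, hu, hw⟩ := hP e
    exact ⟨(u, w), h, hu, hw⟩
  choose pe hpe hPt hPh using hch
  have hidx : Function.Injective (fun e : E => ((Fintype.equivFin E) e : ℕ)) := by
    intro e e' h
    exact (Fintype.equivFin E).injective (Fin.ext h)
  -- group size bounds from the f-coloring
  have hgroup : ∀ (g : E → V) (e : E), (∀ x, 1 ≤ mult (g x) (ends x)) →
      (Finset.univ.filter (fun x => (g x, C0 x) = (g e, C0 e))).card ≤ f (g e) := by
    intro g e hg
    have h1 : (Finset.univ.filter (fun x => (g x, C0 x) = (g e, C0 e))).card ≤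
        ∑ x ∈ Finset.univ.filter (fun x => (g x, C0 x) = (g e, C0 e)),
          mult (g e) (ends x) := by
      rw [Finset.card_eq_sum_ones]
      apply Finset.sum_le_sum
      intro x hx
      rw [Finset.mem_filter] at hx
      have hx1 : g x = g e := congrArg Prod.fst hx.2
      rw [← hx1]
      exact hg x
    have h2 : ∑ x ∈ Finset.univ.filter (fun x => (g x, C0 x) = (g e, C0 e)),
        mult (g e) (ends x) ≤
        ∑ x ∈ Finset.univ.filter (fun x => C0 x = C0 e), mult (g e) (ends x) := by
      apply Finset.sum_le_sum_of_subset
      intro x hx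
      rw [Finset.mem_filter] at hx ⊢
      exact ⟨hx.1, congrArg Prod.snd hx.2⟩
    have h3 : ∑ x ∈ Finset.univ.filter (fun x => C0 x = C0 e), mult (g e) (ends x) =
        degree (subEnds ends fun x => C0 x = C0 e) (g e) := (degree_sub_eq ends _ _).symm
    have h4 := hC0 (C0 e) (g e)
    omega
  have htmem : ∀ x, 1 ≤ mult ((pe x).1) (ends x) := by
    intro x
    rw [hpe x, mult_mk, if_pos rfl]
    omega
  have hhmem : ∀ x, 1 ≤ mult ((pe x).2) (ends x) := by
    intro x
    rw [hpe x, mult_mk, if_pos rfl]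
    omega
  have ob2a : ∀ e, (Finset.univ.filter (fun x => ((pe x).1, C0 x) = ((pe e).1, C0 e) ∧
      ((Fintype.equivFin E) x : ℕ) < ((Fintype.equivFin E) e : ℕ))).card <
      (if P (pe e).1 then f (pe e).1 else 0) := by
    intro e
    rw [if_pos (hPt e)]
    exact lt_of_lt_of_le
      (slot_lt (fun x => ((pe x).1, C0 x)) (fun e => ((Fintype.equivFin E) e : ℕ)) e)
      (hgroup (fun x => (pe x).1) e htmem)
  have ob2b : ∀ e, (Finset.univ.filter (fun x => ((pe x).2, C0 x) = ((pe e).2, C0 e) ∧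
      ((Fintype.equivFin E) x : ℕ) < ((Fintype.equivFin E) e : ℕ))).card <
      (if P (pe e).2 then 0 else f (pe e).2) := by
    intro e
    rw [if_neg (hPh e)]
    exact lt_of_lt_of_le
      (slot_lt (fun x => ((pe x).2, C0 x)) (fun e => ((Fintype.equivFin E) e : ℕ)) e)
      (hgroup (fun x => (pe x).2) e hhmem)
  have ob3 : ∀ v, (if P v then f v else 0) + (if P v then 0 else f v) ≤ f v := by
    intro v
    by_cases h : P v <;> simp [h]
  have ob4a : ∀ e e', e ≠ e' → (pe e).1 = (pe e').1 →
      (Finset.univ.filter (fun x => ((pe x).1, C0 x) = ((pe e).1, C0 e) ∧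
        ((Fintype.equivFin E) x : ℕ) < ((Fintype.equivFin E) e : ℕ))).card =
      (Finset.univ.filter (fun x => ((pe x).1, C0 x) = ((pe e').1, C0 e') ∧
        ((Fintype.equivFin E) x : ℕ) < ((Fintype.equivFin E) e' : ℕ))).card →
      ((C0 e : ℕ) ≠ (C0 e' : ℕ)) := by
    intro e e' hne h1 h2 hc
    apply hne
    have hc' : C0 e = C0 e' := Fin.ext hc
    exact slot_inj (fun x => ((pe x).1, C0 x)) (fun e => ((Fintype.equivFin E) e : ℕ))
      hidx e e' (show ((pe e).1, C0 e) = ((pe e').1, C0 e') by rw [h1, hc']) h2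
  have ob4b : ∀ e e', e ≠ e' → (pe e).2 = (pe e').2 →
      (Finset.univ.filter (fun x => ((pe x).2, C0 x) = ((pe e).2, C0 e) ∧
        ((Fintype.equivFin E) x : ℕ) < ((Fintype.equivFin E) e : ℕ))).card =
      (Finset.univ.filter (fun x => ((pe x).2, C0 x) = ((pe e').2, C0 e') ∧
        ((Fintype.equivFin E) x : ℕ) < ((Fintype.equivFin E) e' : ℕ))).card →
      ((C0 e : ℕ) ≠ (C0 e' : ℕ)) := by
    intro e e' hne h1 h2 hc
    apply hne
    have hc' : C0 e = C0 e' := Fin.ext hc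
    exact slot_inj (fun x => ((pe x).2, C0 x)) (fun e => ((Fintype.equivFin E) e : ℕ))
      hidx e e' (show ((pe e).2, C0 e) = ((pe e').2, C0 e') by rw [h1, hc']) h2
  exact assemble ends f k (fun e => (pe e).1) (fun e => (pe e).2)
    (fun e => (Finset.univ.filter (fun x => ((pe x).1, C0 x) = ((pe e).1, C0 e) ∧
      ((Fintype.equivFin E) x : ℕ) < ((Fintype.equivFin E) e : ℕ))).card)
    (fun e => (Finset.univ.filter (fun x => ((pe x).2, C0 x) = ((pe e).2, C0 e) ∧
      ((Fintype.equivFin E) x : ℕ) < ((Fintype.equivFin E) e : ℕ))).card)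
    (fun e => (C0 e : ℕ))
    (fun v => if P v then f v else 0) (fun v => if P v then 0 else f v)
    hpe ob2a ob2b ob3 (fun e e' hne h1 h2 => ob4a e e' hne h1 h2)
    (fun e e' hne h1 h2 => ob4b e e' hne h1 h2) (fun e => (C0 e).isLt) L h6

lemma hard_even (ends : E → Sym2 V) (f : V → ℕ) (hev : ∀ v, Even (f v)) (k : ℕ)
    (C0 : E → Fin k) (hC0 : FColoring ends f C0)
    (L : E → Finset ℕ) (h6 : ∀ e, k ≤ (L e).card) :
    ∃ C : E → ℕ, (∀ e, C e ∈ L e) ∧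
      ∀ (c : ℕ) (v : V), degree (subEnds ends fun e => C e = c) v ≤ f v := by
  have hbal := fun c : Fin k => balanced (subEnds ends fun e => C0 e = c)
  choose D hDval hDbal using hbal
  have hidx : Function.Injective (fun e : E => ((Fintype.equivFin E) e : ℕ)) := by
    intro e e' h
    exact (Fintype.equivFin E).injective (Fin.ext h)
  have hDall : ∀ (e : E) (c : Fin k) (h : C0 e = c),
      D (C0 e) ⟨e, rfl⟩ = D c ⟨e, h⟩ := by
    intro e c h
    subst h
    rfl
  have h1 : ∀ e, ends e = s((D (C0 e) ⟨e, rfl⟩).1, (D (C0 e) ⟨e, rfl⟩).2) :=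
    fun e => (hDval (C0 e) ⟨e, rfl⟩).symm
  -- group size bounds from balanced orientations
  have hgroupL : ∀ e, (Finset.univ.filter
      (fun x => ((D (C0 x) ⟨x, rfl⟩).1, C0 x) = ((D (C0 e) ⟨e, rfl⟩).1, C0 e))).card ≤
      f ((D (C0 e) ⟨e, rfl⟩).1) / 2 := by
    intro e
    have hcardeq : (Finset.univ.filter
        (fun x => ((D (C0 x) ⟨x, rfl⟩).1, C0 x) = ((D (C0 e) ⟨e, rfl⟩).1, C0 e))).card =
        outDeg (D (C0 e)) ((D (C0 e) ⟨e, rfl⟩).1) := by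
      apply Finset.card_bij (fun x hx =>
        (⟨x, (Prod.ext_iff.mp (Finset.mem_filter.mp hx).2).2⟩ : {y // C0 y = C0 e}))
      · intro x hx
        have h := (Finset.mem_filter.mp hx).2
        rw [Finset.mem_filter]
        refine ⟨Finset.mem_univ _, ?_⟩
        rw [← hDall x (C0 e) ((Prod.ext_iff.mp h).2)]
        exact (Prod.ext_iff.mp h).1
      · intro x hx x' hx' hh
        exact congrArg Subtype.val hh
      · intro y hy
        have h := (Finset.mem_filter.mp hy).2
        refine ⟨y.val, ?_, ?_⟩
        · rw [Finset.mem_filter]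
          refine ⟨Finset.mem_univ _, ?_⟩
          rw [Prod.ext_iff]
          constructor
          · rw [hDall y.val (C0 e) y.prop]
            have : (⟨y.val, y.prop⟩ : {x // C0 x = C0 e}) = y := rfl
            rw [this]
            exact h
          · exact y.prop
        · exact Subtype.ext rfl
    rw [hcardeq]
    have hb := (hDbal (C0 e) ((D (C0 e) ⟨e, rfl⟩).1)).2
    have hd := hC0 (C0 e) ((D (C0 e) ⟨e, rfl⟩).1)
    obtain ⟨m, hm⟩ := hev ((D (C0 e) ⟨e, rfl⟩).1)
    omega
  have hgroupR : ∀ e, (Finset.univ.filter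
      (fun x => ((D (C0 x) ⟨x, rfl⟩).2, C0 x) = ((D (C0 e) ⟨e, rfl⟩).2, C0 e))).card ≤
      f ((D (C0 e) ⟨e, rfl⟩).2) / 2 := by
    intro e
    have hcardeq : (Finset.univ.filter
        (fun x => ((D (C0 x) ⟨x, rfl⟩).2, C0 x) = ((D (C0 e) ⟨e, rfl⟩).2, C0 e))).card =
        inDeg (D (C0 e)) ((D (C0 e) ⟨e, rfl⟩).2) := by
      apply Finset.card_bij (fun x hx =>
        (⟨x, (Prod.ext_iff.mp (Finset.mem_filter.mp hx).2).2⟩ : {y // C0 y = C0 e}))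
      · intro x hx
        have h := (Finset.mem_filter.mp hx).2
        rw [Finset.mem_filter]
        refine ⟨Finset.mem_univ _, ?_⟩
        rw [← hDall x (C0 e) ((Prod.ext_iff.mp h).2)]
        exact (Prod.ext_iff.mp h).1
      · intro x hx x' hx' hh
        exact congrArg Subtype.val hh
      · intro y hy
        have h := (Finset.mem_filter.mp hy).2
        refine ⟨y.val, ?_, ?_⟩
        · rw [Finset.mem_filter]
          refine ⟨Finset.mem_univ _, ?_⟩
          rw [Prod.ext_iff]
          constructor
          · rw [hDall y.val (C0 e) y.prop]
            have : (⟨y.val, y.prop⟩ : {x // C0 x = C0 e}) = y := rfl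
            rw [this]
            exact h
          · exact y.prop
        · exact Subtype.ext rfl
    rw [hcardeq]
    have hb := (hDbal (C0 e) ((D (C0 e) ⟨e, rfl⟩).2)).1
    have hd := hC0 (C0 e) ((D (C0 e) ⟨e, rfl⟩).2)
    obtain ⟨m, hm⟩ := hev ((D (C0 e) ⟨e, rfl⟩).2)
    omega
  have ob2a : ∀ e, (Finset.univ.filter (fun x =>
      ((D (C0 x) ⟨x, rfl⟩).1, C0 x) = ((D (C0 e) ⟨e, rfl⟩).1, C0 e) ∧
      ((Fintype.equivFin E) x : ℕ) < ((Fintype.equivFin E) e : ℕ))).card <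
      f ((D (C0 e) ⟨e, rfl⟩).1) / 2 + 1 := by
    intro e
    have := lt_of_lt_of_le
      (slot_lt (fun x => ((D (C0 x) ⟨x, rfl⟩).1, C0 x))
        (fun e => ((Fintype.equivFin E) e : ℕ)) e) (hgroupL e)
    omega
  have ob2b : ∀ e, (Finset.univ.filter (fun x =>
      ((D (C0 x) ⟨x, rfl⟩).2, C0 x) = ((D (C0 e) ⟨e, rfl⟩).2, C0 e) ∧
      ((Fintype.equivFin E) x : ℕ) < ((Fintype.equivFin E) e : ℕ))).card <
      f ((D (C0 e) ⟨e, rfl⟩).2) / 2 + 1 := by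
    intro e
    have := lt_of_lt_of_le
      (slot_lt (fun x => ((D (C0 x) ⟨x, rfl⟩).2, C0 x))
        (fun e => ((Fintype.equivFin E) e : ℕ)) e) (hgroupR e)
    omega
  have ob3 : ∀ v, (f v / 2) + (f v / 2) ≤ f v := by
    intro v
    omega
  have ob4a : ∀ e e', e ≠ e' → (D (C0 e) ⟨e, rfl⟩).1 = (D (C0 e') ⟨e', rfl⟩).1 →
      (Finset.univ.filter (fun x =>
        ((D (C0 x) ⟨x, rfl⟩).1, C0 x) = ((D (C0 e) ⟨e, rfl⟩).1, C0 e) ∧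
        ((Fintype.equivFin E) x : ℕ) < ((Fintype.equivFin E) e : ℕ))).card =
      (Finset.univ.filter (fun x =>
        ((D (C0 x) ⟨x, rfl⟩).1, C0 x) = ((D (C0 e') ⟨e', rfl⟩).1, C0 e') ∧
        ((Fintype.equivFin E) x : ℕ) < ((Fintype.equivFin E) e' : ℕ))).card →
      ((C0 e : ℕ) ≠ (C0 e' : ℕ)) := by
    intro e e' hne h1 h2 hc
    apply hne
    have hc' : C0 e = C0 e' := Fin.ext hc
    exact slot_inj (fun x => ((D (C0 x) ⟨x, rfl⟩).1, C0 x))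
      (fun e => ((Fintype.equivFin E) e : ℕ)) hidx e e'
      (show ((D (C0 e) ⟨e, rfl⟩).1, C0 e) = ((D (C0 e') ⟨e', rfl⟩).1, C0 e') by
        rw [h1, hc']) h2
  have ob4b : ∀ e e', e ≠ e' → (D (C0 e) ⟨e, rfl⟩).2 = (D (C0 e') ⟨e', rfl⟩).2 →
      (Finset.univ.filter (fun x =>
        ((D (C0 x) ⟨x, rfl⟩).2, C0 x) = ((D (C0 e) ⟨e, rfl⟩).2, C0 e) ∧
        ((Fintype.equivFin E) x : ℕ) < ((Fintype.equivFin E) e : ℕ))).card =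
      (Finset.univ.filter (fun x =>
        ((D (C0 x) ⟨x, rfl⟩).2, C0 x) = ((D (C0 e') ⟨e', rfl⟩).2, C0 e') ∧
        ((Fintype.equivFin E) x : ℕ) < ((Fintype.equivFin E) e' : ℕ))).card →
      ((C0 e : ℕ) ≠ (C0 e' : ℕ)) := by
    intro e e' hne h1 h2 hc
    apply hne
    have hc' : C0 e = C0 e' := Fin.ext hc
    exact slot_inj (fun x => ((D (C0 x) ⟨x, rfl⟩).2, C0 x))
      (fun e => ((Fintype.equivFin E) e : ℕ)) hidx e e'
      (show ((D (C0 e) ⟨e, rfl⟩).2, C0 e) = ((D (C0 e') ⟨e', rfl⟩).2, C0 e') by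
        rw [h1, hc']) h2
  have ob2a' : ∀ e, (Finset.univ.filter (fun x =>
      ((D (C0 x) ⟨x, rfl⟩).1, C0 x) = ((D (C0 e) ⟨e, rfl⟩).1, C0 e) ∧
      ((Fintype.equivFin E) x : ℕ) < ((Fintype.equivFin E) e : ℕ))).card <
      f ((D (C0 e) ⟨e, rfl⟩).1) / 2 := fun e => lt_of_lt_of_le
      (slot_lt (fun x => ((D (C0 x) ⟨x, rfl⟩).1, C0 x))
        (fun e => ((Fintype.equivFin E) e : ℕ)) e) (hgroupL e)
  have ob2b' : ∀ e, (Finset.univ.filter (fun x =>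
      ((D (C0 x) ⟨x, rfl⟩).2, C0 x) = ((D (C0 e) ⟨e, rfl⟩).2, C0 e) ∧
      ((Fintype.equivFin E) x : ℕ) < ((Fintype.equivFin E) e : ℕ))).card <
      f ((D (C0 e) ⟨e, rfl⟩).2) / 2 := fun e => lt_of_lt_of_le
      (slot_lt (fun x => ((D (C0 x) ⟨x, rfl⟩).2, C0 x))
        (fun e => ((Fintype.equivFin E) e : ℕ)) e) (hgroupR e)
  exact assemble ends f k (fun e => (D (C0 e) ⟨e, rfl⟩).1) (fun e => (D (C0 e) ⟨e, rfl⟩).2)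
    (fun e => (Finset.univ.filter (fun x =>
      ((D (C0 x) ⟨x, rfl⟩).1, C0 x) = ((D (C0 e) ⟨e, rfl⟩).1, C0 e) ∧
      ((Fintype.equivFin E) x : ℕ) < ((Fintype.equivFin E) e : ℕ))).card)
    (fun e => (Finset.univ.filter (fun x =>
      ((D (C0 x) ⟨x, rfl⟩).2, C0 x) = ((D (C0 e) ⟨e, rfl⟩).2, C0 e) ∧
      ((Fintype.equivFin E) x : ℕ) < ((Fintype.equivFin E) e : ℕ))).card)
    (fun e => (C0 e : ℕ))
    (fun v => f v / 2) (fun v => f v / 2)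
    h1 ob2a' ob2b' ob3 (fun e e' hne hh1 h2 => ob4a e e' hne hh1 h2)
    (fun e e' hne hh1 h2 => ob4b e e' hne hh1 h2) (fun e => (C0 e).isLt) L h6

end Aux18

/-- for every multigraph `G` and `f` with `f(v) ≥ 1` everywhere, if
`G` is bipartite or `f(v)` is even for all `v`, then `χ'_{f,ℓ}(G) = χ'_f(G)`. -/
theorem fListChromaticIndex_eq {V E : Type} [Fintype V] [Fintype E] [DecidableEq V]
    (ends : E → Sym2 V) (f : V → ℕ) (hf : ∀ v, 1 ≤ f v)
    (hcase : Bipartite ends ∨ ∀ v, Even (f v)) :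
    fListChromaticIndex ends f = fChromaticIndex ends f := by
  unfold fListChromaticIndex fChromaticIndex
  apply congrArg sInf
  ext k
  simp only [Set.mem_setOf_eq]
  constructor
  · intro hlist
    obtain ⟨C, hmem, hdeg⟩ := hlist (fun _ => Finset.range k) (fun e => by simp)
    have hCk : ∀ e, C e < k := fun e => Finset.mem_range.mp (hmem e)
    refine ⟨fun e => ⟨C e, hCk e⟩, ?_⟩
    intro c v
    calc degree (subEnds ends fun e => (⟨C e, hCk e⟩ : Fin k) = c) v
        = ∑ e ∈ Finset.univ.filter (fun e => (⟨C e, hCk e⟩ : Fin k) = c), mult v (ends e) :=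
          degree_sub_eq ends _ v
      _ = ∑ e ∈ Finset.univ.filter (fun e => C e = (c : ℕ)), mult v (ends e) := by
          congr 1
          ext e
          simp [Fin.ext_iff]
      _ = degree (subEnds ends fun e => C e = (c : ℕ)) v := (degree_sub_eq ends _ v).symm
      _ ≤ f v := hdeg (c : ℕ) v
  · intro hcol L hL
    obtain ⟨C0, hC0⟩ := hcol
    rcases hcase with hbip | hev
    · exact hard_bipartite ends f hbip k C0 hC0 L hL
    · exact hard_even ends f hev k C0 hC0 L hL

end MG
end
end
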